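/- arXiv:2208.01484 — 5 statements merged into one kernel-verified Lean document; each statement's English description precedes it below -/
import Mathlib

section
/- If σ is an unrestrictive permutation, then F_n(123, σ) = F_n(123) for all n ≥ 0; in particular |F_n(123, σ)| = 2^{n−1} for all n ≥ 1. -/
/-- Two lists of naturals have the same length and the same relative order
(including ties). -/
def SameRelOrder (u v : List ℕ) : Prop :=
  u.length = v.length ∧
    ∀ i j, i < u.length → j < u.length →
      (u.getD i 0 < u.getD j 0 ↔ v.getD i 0 < v.getD j 0)

/-- `α` contains `β` as a pattern: some subsequence of `α` has the same length
and relative order as `β`. -/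
def SeqContains (α β : List ℕ) : Prop :=
  ∃ γ : List ℕ, γ.Sublist α ∧ SameRelOrder γ β

/-- A copy of the Fishburn pattern `f` in `l`: indices `j`, `k` with `j + 1 < k`,
`l j = l k + 1` and `l (j+1) > l j`. -/
def HasFishburnCopy (l : List ℕ) : Prop :=
  ∃ j k, j + 1 < k ∧ k < l.length ∧
    l.getD j 0 = l.getD k 0 + 1 ∧ l.getD j 0 < l.getD (j + 1) 0

/-- A Fishburn permutation contains no copy of the Fishburn pattern `f`. -/
def FishburnFree (l : List ℕ) : Prop := ¬ HasFishburnCopy l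

/-- `l` is a permutation of `1, …, n`, written in one-line notation. -/
def IsPermList (n : ℕ) (l : List ℕ) : Prop := l.Perm (List.range' 1 n)

/-- The set of Fishburn permutations of length `n` avoiding each pattern in `pats`. -/
def FishburnSet (n : ℕ) (pats : List (List ℕ)) : Set (List ℕ) :=
  {l | IsPermList n l ∧ FishburnFree l ∧ ∀ p ∈ pats, ¬ SeqContains l p}

/-- The set of all permutations of length `n` avoiding each pattern in `pats`. -/
def PermSet (n : ℕ) (pats : List (List ℕ)) : Set (List ℕ) :=
  {l | IsPermList n l ∧ ∀ p ∈ pats, ¬ SeqContains l p}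

/-- The number of ascents of a sequence. -/
def ascCount (l : List ℕ) : ℕ :=
  ((Finset.range l.length).filter
    (fun i => i + 1 < l.length ∧ l.getD i 0 < l.getD (i + 1) 0)).card

/-- `l` is an ascent sequence. -/
def IsAscentSeq (l : List ℕ) : Prop :=
  (0 < l.length → l.getD 0 0 = 0) ∧
    ∀ j, 0 < j → j < l.length → l.getD j 0 ≤ 1 + ascCount (l.take j)

/-- The set of ascent sequences of length `n` avoiding each pattern in `pats`. -/
def AscentSeqSet (n : ℕ) (pats : List (List ℕ)) : Set (List ℕ) :=
  {l | l.length = n ∧ IsAscentSeq l ∧ ∀ p ∈ pats, ¬ SeqContains l p}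

/-- A permutation is unrestrictive if it avoids 123, contains a copy of the
Fishburn pattern `f`, and contains at least one of 2413 and 3412. -/
def Unrestrictive (σ : List ℕ) : Prop :=
  ¬ SeqContains σ [1, 2, 3] ∧ HasFishburnCopy σ ∧
    (SeqContains σ [2, 4, 1, 3] ∨ SeqContains σ [3, 4, 1, 2])

/-- A permutation is restrictive if it avoids 123, contains a copy of the
Fishburn pattern `f`, and avoids both 2413 and 3412. -/
def Restrictive (σ : List ℕ) : Prop :=
  ¬ SeqContains σ [1, 2, 3] ∧ HasFishburnCopy σ ∧
    ¬ SeqContains σ [2, 4, 1, 3] ∧ ¬ SeqContains σ [3, 4, 1, 2]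

-- ====== auxiliary lemmas ======

lemma getD_eq_getElem' {l : List ℕ} {i : ℕ} (h : i < l.length) : l.getD i 0 = l[i] :=
  List.getD_eq_getElem l 0 h

lemma exists_positions {u π : List ℕ} (h : u.Sublist π) :
    ∃ f : ℕ → ℕ, StrictMono f ∧
      ∀ i, i < u.length → f i < π.length ∧ π.getD (f i) 0 = u.getD i 0 := by
  rw [List.sublist_iff_exists_orderEmbedding_getElem?_eq] at h
  obtain ⟨f, hf⟩ := h
  refine ⟨f, f.strictMono, fun i hi => ?_⟩
  have h1 := (hf i).symm
  rw [List.getElem?_eq_getElem hi] at h1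
  rw [List.getElem?_eq_some_iff] at h1
  obtain ⟨hlt, hval⟩ := h1
  refine ⟨hlt, ?_⟩
  rw [getD_eq_getElem' hlt, getD_eq_getElem' hi]
  simpa [List.get_eq_getElem] using hval

lemma map_getD_sublist (π : List ℕ) (ps : List ℕ) (hp : ps.Pairwise (· < ·))
    (hlt : ∀ p ∈ ps, p < π.length) : (ps.map (fun p => π.getD p 0)).Sublist π := by
  rw [List.sublist_iff_exists_orderEmbedding_getElem?_eq]
  have hmono : StrictMono (fun i => if h : i < ps.length then ps[i] else π.length + i) := by
    intro a b hab
    dsimp only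
    by_cases hb : b < ps.length
    · have ha : a < ps.length := hab.trans hb
      rw [dif_pos ha, dif_pos hb]
      exact List.pairwise_iff_getElem.mp hp a b ha hb hab
    · by_cases ha : a < ps.length
      · rw [dif_pos ha, dif_neg hb]
        exact lt_of_lt_of_le (hlt _ (List.getElem_mem ha)) (by omega)
      · rw [dif_neg ha, dif_neg hb]; omega
  refine ⟨OrderEmbedding.ofStrictMono _ hmono, fun ix => ?_⟩
  have hcoe : (OrderEmbedding.ofStrictMono _ hmono) ix
      = if h : ix < ps.length then ps[ix] else π.length + ix := rfl
  rw [hcoe]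
  by_cases hix : ix < ps.length
  · rw [dif_pos hix]
    have h1 : ix < (ps.map (fun p => π.getD p 0)).length := by simpa using hix
    have h2 : ps[ix] < π.length := hlt _ (List.getElem_mem hix)
    rw [List.getElem?_eq_getElem h1, List.getElem?_eq_getElem h2]
    simp only [List.get_eq_getElem, List.getElem_map]
    simp [List.getD, List.getElem?_eq_getElem h2]
  · rw [dif_neg hix]
    rw [List.getElem?_eq_none (by simpa using Nat.le_of_not_lt hix),
      List.getElem?_eq_none (by omega)]

lemma seqContains_trans {α β γ : List ℕ} (h1 : SeqContains α β) (h2 : SeqContains β γ) :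
    SeqContains α γ := by
  obtain ⟨u, hu, hul, huo⟩ := h1
  obtain ⟨v, hv, hvl, hvo⟩ := h2
  obtain ⟨f, hfm, hf⟩ := exists_positions hv
  have hflt : ∀ i, i < v.length → f i < u.length := by
    intro i hi; rw [hul]; exact (hf i hi).1
  set ps : List ℕ := (List.range v.length).map f with hps
  have hpslen : ps.length = v.length := by simp [hps]
  have hppw : ps.Pairwise (· < ·) := by
    refine (List.pairwise_map).mpr ?_
    exact (List.pairwise_lt_range).imp (fun h => hfm h)
  have hpslt : ∀ p ∈ ps, p < u.length := by
    intro p hp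
    simp only [hps, List.mem_map, List.mem_range] at hp
    obtain ⟨i, hi, rfl⟩ := hp
    exact hflt i hi
  set w : List ℕ := ps.map (fun p => u.getD p 0) with hw
  have hwlen : w.length = v.length := by simp [hw, hps]
  have hwget : ∀ i, i < v.length → w.getD i 0 = u.getD (f i) 0 := by
    intro i hi
    have h1 : i < w.length := by omega
    rw [getD_eq_getElem' h1]
    simp only [hw, hps, List.getElem_map, List.getElem_range]
  refine ⟨w, (map_getD_sublist u ps hppw hpslt).trans hu, by omega, ?_⟩
  intro i j hi hj
  have hi' : i < v.length := by omega
  have hj' : j < v.length := by omega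
  rw [hwget i hi', hwget j hj']
  rw [huo (f i) (f j) (hflt i hi') (hflt j hj')]
  rw [(hf i hi').2, (hf j hj').2]
  exact hvo i j hi' hj'

lemma double_rise {π ρ : List ℕ} (h : SeqContains π ρ) (hlen : ρ.length = 4)
    (h01 : ρ.getD 0 0 < ρ.getD 1 0) (h23 : ρ.getD 2 0 < ρ.getD 3 0) :
    ∃ p0 p1 p2 p3, p0 < p1 ∧ p1 < p2 ∧ p2 < p3 ∧ p3 < π.length ∧
      π.getD p0 0 < π.getD p1 0 ∧ π.getD p2 0 < π.getD p3 0 := by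
  obtain ⟨u, hu, hul, huo⟩ := h
  obtain ⟨f, hfm, hf⟩ := exists_positions hu
  have h4 : u.length = 4 := by omega
  refine ⟨f 0, f 1, f 2, f 3, hfm (by norm_num), hfm (by norm_num), hfm (by norm_num),
    (hf 3 (by omega)).1, ?_, ?_⟩
  · rw [(hf 0 (by omega)).2, (hf 1 (by omega)).2]
    exact (huo 0 1 (by omega) (by omega)).mpr h01
  · rw [(hf 2 (by omega)).2, (hf 3 (by omega)).2]
    exact (huo 2 3 (by omega) (by omega)).mpr h23

def Asc1 (π : List ℕ) : Prop :=
  ∀ i, i + 1 < π.length → π.getD i 0 < π.getD (i + 1) 0 → π.getD i 0 = 1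

lemma asc1_of_mem {n : ℕ} {π : List ℕ} (hperm : IsPermList n π) (hff : FishburnFree π)
    (h123 : ¬ SeqContains π [1, 2, 3]) : Asc1 π := by
  intro i hi hasc
  by_contra hne
  have hilen : i < π.length := by omega
  have hmem : π.getD i 0 ∈ π := by rw [getD_eq_getElem' hilen]; exact List.getElem_mem _
  have hbound : 1 ≤ π.getD i 0 ∧ π.getD i 0 < 1 + n := by
    have := hperm.mem_iff.mp hmem
    rwa [List.mem_range'_1] at this
  have hv2 : 2 ≤ π.getD i 0 := by omega
  have hm : π.getD i 0 - 1 ∈ π := by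
    rw [hperm.mem_iff, List.mem_range'_1]; omega
  obtain ⟨k, hk, hkv⟩ := List.mem_iff_getElem.mp hm
  have hkD : π.getD k 0 = π.getD i 0 - 1 := by rw [getD_eq_getElem' hk, hkv]
  rcases lt_trichotomy k i with h | h | h
  · apply h123
    refine ⟨[π.getD k 0, π.getD i 0, π.getD (i+1) 0], ?_, ?_, ?_⟩
    · have := map_getD_sublist π [k, i, i+1]
        (by constructor
            · intro b hb; simp at hb; omega
            · constructor
              · intro b hb; simp at hb; omega
              · simp)
        (by intro p hp; simp at hp; omega)
      simpa using this
    · simp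
    · intro a b ha hb
      simp only [List.length_cons, List.length_nil] at ha hb
      have h1 : π.getD k 0 < π.getD i 0 := by omega
      have h2 : π.getD i 0 < π.getD (i+1) 0 := hasc
      generalize π.getD k 0 = x at h1 ⊢
      generalize π.getD i 0 = y at h1 h2 ⊢
      generalize π.getD (i+1) 0 = z at h2 ⊢
      interval_cases a <;> interval_cases b <;>
        simp [List.getD_cons_zero, List.getD_cons_succ] <;> omega
  · exfalso; rw [h] at hkD; omega
  · have hne2 : k ≠ i + 1 := by
      intro hk1
      rw [hk1] at hkD; omega
    exact hff ⟨i, k, by omega, hk, by omega, hasc⟩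

lemma desc_between {π : List ℕ} (ha : Asc1 π) :
    ∀ p q, p < q → q < π.length → π.getD p 0 < π.getD q 0 →
      ∃ i, p ≤ i ∧ i < q ∧ π.getD i 0 < π.getD (i + 1) 0 := by
  intro p q hpq hq hlt
  by_contra hno
  push_neg at hno
  have key : ∀ d, p + d ≤ q → π.getD (p + d) 0 ≤ π.getD p 0 := by
    intro d
    induction d with
    | zero => simp
    | succ d ih =>
      intro hle
      have h1 : π.getD (p + d) 0 ≤ π.getD p 0 := ih (by omega)
      have h2 := hno (p + d) (by omega) (by omega)
      have : π.getD (p + d + 1) 0 ≤ π.getD (p + d) 0 := by omega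
      have heq : p + (d + 1) = p + d + 1 := by omega
      rw [heq]; omega
  have := key (q - p) (by omega)
  rw [show p + (q - p) = q by omega] at this
  omega

lemma after_rise_desc {π : List ℕ} (hnd : π.Nodup) (ha : Asc1 π) :
    ∀ p q r s, p < q → q ≤ r → r < s → s < π.length → π.getD p 0 < π.getD q 0 →
      π.getD s 0 < π.getD r 0 := by
  intro p q r s hpq hqr hrs hs hlt
  by_contra hc
  push_neg at hc
  have hrlen : r < π.length := by omega
  have hne : π.getD r 0 ≠ π.getD s 0 := by
    rw [getD_eq_getElem' hrlen, getD_eq_getElem' hs]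
    rw [Ne, hnd.getElem_inj_iff]; omega
  have h2 : π.getD r 0 < π.getD s 0 := by omega
  obtain ⟨i1, hi1p, hi1q, hasc1⟩ := desc_between ha p q hpq (by omega) hlt
  obtain ⟨i2, hi2r, hi2s, hasc2⟩ := desc_between ha r s hrs hs h2
  have e1 : π.getD i1 0 = 1 := ha i1 (by omega) hasc1
  have e2 : π.getD i2 0 = 1 := ha i2 (by omega) hasc2
  have hi1len : i1 < π.length := by omega
  have hi2len : i2 < π.length := by omega
  rw [getD_eq_getElem' hi1len] at e1
  rw [getD_eq_getElem' hi2len] at e2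
  have : i1 = i2 := hnd.getElem_inj_iff.mp (e1.trans e2.symm)
  omega

lemma nodup_of_perm {n : ℕ} {π : List ℕ} (hperm : IsPermList n π) : π.Nodup :=
  hperm.nodup_iff.mpr (List.nodup_range' (s := 1) (n := n))

lemma mem_fish_iff {n : ℕ} {π : List ℕ} :
    π ∈ FishburnSet n [[1, 2, 3]] ↔ IsPermList n π ∧ Asc1 π := by
  constructor
  · rintro ⟨h1, h2, h3⟩
    exact ⟨h1, asc1_of_mem h1 h2 (h3 [1,2,3] (by simp))⟩
  · rintro ⟨h1, h2⟩
    refine ⟨h1, ?_, ?_⟩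
    · rintro ⟨j, k, hjk, hk, heq, hlt⟩
      have hj1 : π.getD j 0 = 1 := h2 j (by omega) hlt
      have hklen : k < π.length := hk
      have : π.getD k 0 ∈ π := by rw [getD_eq_getElem' hklen]; exact List.getElem_mem _
      have := h1.mem_iff.mp this
      rw [List.mem_range'_1] at this
      omega
    · intro p hp hcon
      simp only [List.mem_singleton] at hp
      subst hp
      obtain ⟨u, hu, hul, huo⟩ := hcon
      obtain ⟨f, hfm, hf⟩ := exists_positions hu
      have h3 : u.length = 3 := by simpa using hul
      have hv1 : π.getD (f 0) 0 < π.getD (f 1) 0 := by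
        rw [(hf 0 (by omega)).2, (hf 1 (by omega)).2]
        exact (huo 0 1 (by omega) (by omega)).mpr (by simp)
      have hv2 : π.getD (f 1) 0 < π.getD (f 2) 0 := by
        rw [(hf 1 (by omega)).2, (hf 2 (by omega)).2]
        exact (huo 1 2 (by omega) (by omega)).mpr (by simp)
      have := after_rise_desc (nodup_of_perm h1) h2 (f 0) (f 1) (f 1) (f 2)
        (hfm (by norm_num)) le_rfl (hfm (by norm_num)) (hf 2 (by omega)).1 hv1
      omega

noncomputable def buildP (n : ℕ) (s : Finset ℕ) : List ℕ :=
  s.sort (· ≥ ·) ++ 1 :: (Finset.Icc 2 n \ s).sort (· ≥ ·)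

lemma sort_pairwise_gt (s : Finset ℕ) : (s.sort (· ≥ ·)).Pairwise (· > ·) := by
  have h1 : (s.sort (· ≥ ·)).Pairwise (· ≥ ·) := Finset.pairwise_sort s _
  have h2 : (s.sort (· ≥ ·)).Pairwise (· ≠ ·) := Finset.sort_nodup s _
  exact (h1.and h2).imp (fun h => lt_of_le_of_ne h.1 (Ne.symm h.2))

lemma asc1_of_parts {A B : List ℕ} (hAgt : A.Pairwise (· > ·)) (hBgt : B.Pairwise (· > ·))
    (hA2 : ∀ x ∈ A, 2 ≤ x) : Asc1 (A ++ 1 :: B) := by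
  intro i hi hasc
  rw [List.length_append, List.length_cons] at hi
  by_cases h1 : i + 1 < A.length
  · exfalso
    rw [List.getD_append _ _ _ _ (by omega), List.getD_append _ _ _ _ h1] at hasc
    have hlt : A.getD i 0 > A.getD (i+1) 0 := by
      rw [getD_eq_getElem' (by omega), getD_eq_getElem' h1]
      exact List.pairwise_iff_getElem.mp hAgt i (i+1) (by omega) h1 (by omega)
    omega
  · by_cases h2 : i < A.length
    · exfalso
      have hi1 : i + 1 = A.length := by omega
      rw [List.getD_append _ _ _ _ h2,
        List.getD_append_right _ _ _ _ (by omega), hi1, Nat.sub_self,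
        List.getD_cons_zero] at hasc
      have hmem : A.getD i 0 ∈ A := by
        rw [getD_eq_getElem' h2]; exact List.getElem_mem _
      have := hA2 _ hmem
      omega
    · by_cases h3 : i = A.length
      · rw [List.getD_append_right _ _ _ _ (by omega), h3, Nat.sub_self,
          List.getD_cons_zero]
      · exfalso
        have hgi : A.length < i := by omega
        rw [List.getD_append_right _ _ _ _ (by omega),
          List.getD_append_right _ _ _ _ (by omega)] at hasc
        rw [show i - A.length = (i - A.length - 1) + 1 by omega,
          show i + 1 - A.length = (i - A.length - 1) + 2 by omega] at hasc
        rw [List.getD_cons_succ, List.getD_cons_succ] at hasc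
        set j := i - A.length - 1 with hj
        have hjb : j + 1 < B.length := by omega
        have hlt : B.getD j 0 > B.getD (j+1) 0 := by
          rw [getD_eq_getElem' (by omega), getD_eq_getElem' hjb]
          exact List.pairwise_iff_getElem.mp hBgt j (j+1) (by omega) hjb (by omega)
        omega

lemma build_asc1 {n : ℕ} {s : Finset ℕ} (hs : s ⊆ Finset.Icc 2 n) : Asc1 (buildP n s) := by
  apply asc1_of_parts (sort_pairwise_gt s) (sort_pairwise_gt (Finset.Icc 2 n \ s))
  intro x hx
  rw [Finset.mem_sort] at hx
  exact (Finset.mem_Icc.mp (hs hx)).1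

lemma build_perm {n : ℕ} {s : Finset ℕ} (hn : 1 ≤ n) (hs : s ⊆ Finset.Icc 2 n) :
    IsPermList n (buildP n s) := by
  have hsI : ∀ x ∈ s, 2 ≤ x ∧ x ≤ n := fun x hx => Finset.mem_Icc.mp (hs hx)
  apply List.perm_of_nodup_nodup_toFinset_eq
  · rw [buildP, List.nodup_append]
    refine ⟨Finset.sort_nodup _ _, ?_, ?_⟩
    · rw [List.nodup_cons]
      constructor
      · intro h1
        rw [Finset.mem_sort, Finset.mem_sdiff, Finset.mem_Icc] at h1
        omega
      · exact Finset.sort_nodup _ _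
    · intro x hxA y hxB
      rw [Finset.mem_sort] at hxA
      rcases List.mem_cons.mp hxB with rfl | hxB
      · have := hsI _ hxA; omega
      · rw [Finset.mem_sort, Finset.mem_sdiff] at hxB
        exact fun h => hxB.2 (h ▸ hxA)
  · exact List.nodup_range' (s := 1) (n := n)
  · ext x
    simp only [buildP, List.toFinset_append, List.toFinset_cons, Finset.mem_union,
      Finset.mem_insert, List.mem_toFinset, List.mem_range'_1, Finset.mem_sort,
      Finset.mem_sdiff, Finset.mem_Icc]
    constructor
    · rintro (hx | rfl | hx)
      · have := hsI x hx; omega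
      · omega
      · omega
    · rintro ⟨hx1, hx2⟩
      by_cases hxs : x ∈ s
      · exact Or.inl hxs
      · by_cases hx1' : x = 1
        · exact Or.inr (Or.inl hx1')
        · exact Or.inr (Or.inr ⟨⟨by omega, by omega⟩, hxs⟩)

lemma decomp {n : ℕ} {π : List ℕ} (hn : 1 ≤ n) (hperm : IsPermList n π) (hasc : Asc1 π) :
    ∃ s ∈ (Finset.Icc 2 n).powerset, π = buildP n s := by
  have hnd : π.Nodup := nodup_of_perm hperm
  have h1mem : (1:ℕ) ∈ π := by rw [hperm.mem_iff, List.mem_range'_1]; omega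
  obtain ⟨t, ht, htv⟩ := List.mem_iff_getElem.mp h1mem
  have hsplit : π = π.take t ++ 1 :: π.drop (t+1) := by
    have hd : π[t] :: π.drop (t+1) = π.drop t := List.getElem_cons_drop ht
    rw [htv] at hd
    conv_lhs => rw [← List.take_append_drop t π]
    rw [← hd]
  have hlen_take : (π.take t).length = t := by rw [List.length_take]; omega
  have hApw : (π.take t).Pairwise (· > ·) := by
    rw [← List.isChain_iff_pairwise, List.isChain_iff_getElem]
    intro i hilen
    rw [hlen_take] at hilen
    have hi1 : i + 1 < t := by omega
    rw [List.getElem_take, List.getElem_take]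
    by_contra hle
    push_neg at hle
    have hne : π[i] ≠ π[i+1] := by rw [Ne, hnd.getElem_inj_iff]; omega
    have hasc' : π.getD i 0 < π.getD (i+1) 0 := by
      rw [getD_eq_getElem' (by omega), getD_eq_getElem' (by omega)]; omega
    have he1 := hasc i (by omega) hasc'
    rw [getD_eq_getElem' (by omega)] at he1
    have : i = t := hnd.getElem_inj_iff.mp (by rw [he1, htv])
    omega
  have hBpw : (π.drop (t+1)).Pairwise (· > ·) := by
    rw [← List.isChain_iff_pairwise, List.isChain_iff_getElem]
    intro i hilen
    rw [List.length_drop] at hilen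
    rw [List.getElem_drop, List.getElem_drop]
    simp only [show t + 1 + (i + 1) = t + 1 + i + 1 from by omega]
    by_contra hle
    push_neg at hle
    have hb1 : t + 1 + i < π.length := by omega
    have hb2 : t + 1 + i + 1 < π.length := by omega
    have hne : π[t+1+i] ≠ π[t+1+i+1] := by rw [Ne, hnd.getElem_inj_iff]; omega
    have hasc' : π.getD (t+1+i) 0 < π.getD (t+1+i+1) 0 := by
      rw [getD_eq_getElem' hb1, getD_eq_getElem' hb2]; omega
    have he1 := hasc (t+1+i) (by omega) hasc'
    rw [getD_eq_getElem' hb1] at he1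
    have : t + 1 + i = t := hnd.getElem_inj_iff.mp (by rw [he1, htv])
    omega
  have h1A : (1:ℕ) ∉ π.take t := by
    intro hmem
    obtain ⟨i, hi, hiv⟩ := List.mem_iff_getElem.mp hmem
    rw [hlen_take] at hi
    rw [List.getElem_take] at hiv
    have : i = t := hnd.getElem_inj_iff.mp (hiv.trans htv.symm)
    omega
  have hsub : (π.take t).toFinset ⊆ Finset.Icc 2 n := by
    intro x hx
    rw [List.mem_toFinset] at hx
    have hxπ : x ∈ π := (List.take_sublist t π).subset hx
    have hr := hperm.mem_iff.mp hxπ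
    rw [List.mem_range'_1] at hr
    have hx1 : x ≠ 1 := fun h => h1A (h ▸ hx)
    rw [Finset.mem_Icc]; omega
  have hnd2 := hsplit ▸ hnd
  rw [List.nodup_append, List.nodup_cons] at hnd2
  obtain ⟨hAnd, ⟨h1B, hBnd⟩, hdisj⟩ := hnd2
  have hAeq : π.take t = (π.take t).toFinset.sort (· ≥ ·) := by
    apply List.Perm.eq_of_pairwise' (r := (· ≥ ·))
    rotate_right
    · apply List.perm_of_nodup_nodup_toFinset_eq hAnd (Finset.sort_nodup _ _)
      rw [Finset.sort_toFinset]
    · exact hApw.imp le_of_lt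
    · exact Finset.pairwise_sort _ _
  have hBto : (π.drop (t+1)).toFinset = Finset.Icc 2 n \ (π.take t).toFinset := by
    ext x
    rw [List.mem_toFinset, Finset.mem_sdiff, Finset.mem_Icc, List.mem_toFinset]
    constructor
    · intro hx
      have hxπ : x ∈ π := (List.drop_sublist (t+1) π).subset hx
      have hr := hperm.mem_iff.mp hxπ
      rw [List.mem_range'_1] at hr
      have hx1 : x ≠ 1 := fun h => h1B (h ▸ hx)
      have hxA : x ∉ π.take t := fun hA' => hdisj x hA' x (List.mem_cons_of_mem _ hx) rfl
      exact ⟨⟨by omega, by omega⟩, hxA⟩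
    · rintro ⟨⟨hx2, hxn⟩, hxA⟩
      have hxπ : x ∈ π := by rw [hperm.mem_iff, List.mem_range'_1]; omega
      rw [hsplit, List.mem_append, List.mem_cons] at hxπ
      rcases hxπ with h | h | h
      · exact absurd h hxA
      · omega
      · exact h
  have hBeq : π.drop (t+1) = ((π.drop (t+1)).toFinset).sort (· ≥ ·) := by
    apply List.Perm.eq_of_pairwise' (r := (· ≥ ·))
    rotate_right
    · apply List.perm_of_nodup_nodup_toFinset_eq hBnd (Finset.sort_nodup _ _)
      rw [Finset.sort_toFinset]
    · exact hBpw.imp le_of_lt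
    · exact Finset.pairwise_sort _ _
  refine ⟨(π.take t).toFinset, Finset.mem_powerset.mpr hsub, ?_⟩
  rw [buildP, ← hBto, ← hAeq, ← hBeq]
  exact hsplit

lemma build_takeWhile {n : ℕ} {s : Finset ℕ} (hs : s ⊆ Finset.Icc 2 n) :
    (buildP n s).takeWhile (fun x => decide (2 ≤ x)) = s.sort (· ≥ ·) := by
  rw [buildP, List.takeWhile_append]
  have hself : (s.sort (· ≥ ·)).takeWhile (fun x => decide (2 ≤ x)) = s.sort (· ≥ ·) := by
    rw [List.takeWhile_eq_self_iff]
    intro a ha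
    rw [Finset.mem_sort] at ha
    simpa using (Finset.mem_Icc.mp (hs ha)).1
  rw [hself, if_pos rfl, List.takeWhile_cons_of_neg (by simp), List.append_nil]

lemma build_injOn {n : ℕ} : Set.InjOn (buildP n) ↑(Finset.Icc 2 n).powerset := by
  intro s hs s' hs' heq
  rw [Finset.mem_coe, Finset.mem_powerset] at hs hs'
  have h1 := build_takeWhile hs
  have h2 := build_takeWhile hs'
  rw [heq] at h1
  have hsort : s.sort (· ≥ ·) = s'.sort (· ≥ ·) := h1.symm.trans h2
  have him := congrArg List.toFinset hsort
  rwa [Finset.sort_toFinset, Finset.sort_toFinset] at him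

lemma fish_count {n : ℕ} (hn : 1 ≤ n) :
    (FishburnSet n [[1, 2, 3]]).ncard = 2 ^ (n - 1) := by
  have hset : FishburnSet n [[1, 2, 3]] = buildP n '' ↑(Finset.Icc 2 n).powerset := by
    ext π
    rw [Set.mem_image]
    constructor
    · intro hπ
      obtain ⟨h1, h2⟩ := mem_fish_iff.mp hπ
      obtain ⟨s, hs, hEq⟩ := decomp hn h1 h2
      exact ⟨s, Finset.mem_coe.mpr hs, hEq.symm⟩
    · rintro ⟨s, hs, rfl⟩
      rw [Finset.mem_coe, Finset.mem_powerset] at hs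
      exact mem_fish_iff.mpr ⟨build_perm hn hs, build_asc1 hs⟩
  rw [hset, Set.ncard_image_of_injOn build_injOn, Set.ncard_coe_finset,
    Finset.card_powerset, Nat.card_Icc]
  have hpow : n + 1 - 2 = n - 1 := by omega
  rw [hpow]

lemma set_eq_fish {σ : List ℕ} (hu : Unrestrictive σ) (n : ℕ) :
    FishburnSet n [[1, 2, 3], σ] = FishburnSet n [[1, 2, 3]] := by
  ext π
  constructor
  · rintro ⟨h1, h2, h3⟩
    exact ⟨h1, h2, fun p hp => h3 p (by simp at hp ⊢; tauto)⟩
  · rintro ⟨h1, h2, h3⟩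
    refine ⟨h1, h2, ?_⟩
    intro p hp
    rcases List.mem_cons.mp hp with rfl | hp'
    · exact h3 _ (by simp)
    · rw [List.mem_singleton] at hp'
      subst hp'
      intro hcon
      have h123 := h3 [1,2,3] (by simp)
      have hasc := asc1_of_mem h1 h2 h123
      have hnd := nodup_of_perm h1
      rcases hu.2.2 with hρ | hρ
      · obtain ⟨p0,p1,p2,p3,h01,h12,h23,hlen,ha,hb⟩ :=
          double_rise (seqContains_trans hcon hρ) (by decide) (by decide) (by decide)
        have := after_rise_desc hnd hasc p0 p1 p2 p3 h01 (le_of_lt h12) h23 hlen ha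
        omega
      · obtain ⟨p0,p1,p2,p3,h01,h12,h23,hlen,ha,hb⟩ :=
          double_rise (seqContains_trans hcon hρ) (by decide) (by decide) (by decide)
        have := after_rise_desc hnd hasc p0 p1 p2 p3 h01 (le_of_lt h12) h23 hlen ha
        omega


/-- If `σ` is an unrestrictive permutation then `F_n(123, σ) = F_n(123)` for all
`n ≥ 0`; in particular `|F_n(123, σ)| = 2 ^ (n - 1)` for all `n ≥ 1`. -/
theorem stmt11 (m : ℕ) (σ : List ℕ) (hσ : IsPermList m σ) (hu : Unrestrictive σ) :
    (∀ n : ℕ, FishburnSet n [[1, 2, 3], σ] = FishburnSet n [[1, 2, 3]]) ∧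
      ∀ n : ℕ, 1 ≤ n → (FishburnSet n [[1, 2, 3], σ]).ncard = 2 ^ (n - 1) := by
  constructor
  · exact set_eq_fish hu
  · intro n hn
    rw [set_eq_fish hu n, fish_count hn]
end

section
/- If σ is a restrictive permutation, then σ contains exactly one copy of the Fishburn pattern f, i.e. there is exactly one pair of indices (j, k) with j+1 < k, σ_j = σ_k + 1, and σ_{j+1} > σ_j. -/
lemma sub_cons (l : List ℕ) (i : ℕ) (hi : i < l.length) {t : List ℕ}
    (ht : t.Sublist (l.drop (i+1))) : (l[i] :: t).Sublist l := by
  have h1 : (l[i] :: t).Sublist (l[i] :: l.drop (i+1)) := ht.cons₂ _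
  rw [List.getElem_cons_drop] at h1
  exact h1.trans (List.drop_sublist i l)

lemma sub2 (l : List ℕ) (i1 i2 : ℕ) (h12 : i1 < i2) (h2 : i2 < l.length) :
    [l.getD i1 0, l.getD i2 0].Sublist l := by
  have h1 : i1 < l.length := by omega
  rw [List.getD_eq_getElem _ _ h1, List.getD_eq_getElem _ _ h2]
  refine sub_cons l i1 h1 ?_
  rw [List.singleton_sublist]
  have hb : i2 - (i1+1) < (l.drop (i1+1)).length := by simp; omega
  have : (l.drop (i1+1))[i2 - (i1+1)] = l[i2] := by
    rw [List.getElem_drop]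
    congr 1
    omega
  rw [← this]
  exact List.getElem_mem hb

lemma sub3 (l : List ℕ) (i1 i2 i3 : ℕ) (h12 : i1 < i2) (h23 : i2 < i3) (h3 : i3 < l.length) :
    [l.getD i1 0, l.getD i2 0, l.getD i3 0].Sublist l := by
  have h1 : i1 < l.length := by omega
  rw [List.getD_eq_getElem _ _ h1]
  refine sub_cons l i1 h1 ?_
  have e2 : l.getD i2 0 = (l.drop (i1+1)).getD (i2 - (i1+1)) 0 := by
    rw [List.getD_eq_getElem _ _ (by omega), List.getD_eq_getElem _ _ (by simp; omega)]
    rw [List.getElem_drop]; congr 1; omega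
  have e3 : l.getD i3 0 = (l.drop (i1+1)).getD (i3 - (i1+1)) 0 := by
    rw [List.getD_eq_getElem _ _ h3, List.getD_eq_getElem _ _ (by simp; omega)]
    rw [List.getElem_drop]; congr 1; omega
  rw [e2, e3]
  exact sub2 _ _ _ (by omega) (by simp; omega)

lemma sub4 (l : List ℕ) (i1 i2 i3 i4 : ℕ) (h12 : i1 < i2) (h23 : i2 < i3) (h34 : i3 < i4)
    (h4 : i4 < l.length) :
    [l.getD i1 0, l.getD i2 0, l.getD i3 0, l.getD i4 0].Sublist l := by
  have h1 : i1 < l.length := by omega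
  rw [List.getD_eq_getElem _ _ h1]
  refine sub_cons l i1 h1 ?_
  have e : ∀ i, i1 < i → i < l.length → l.getD i 0 = (l.drop (i1+1)).getD (i - (i1+1)) 0 := by
    intro i hlt hle
    rw [List.getD_eq_getElem _ _ hle, List.getD_eq_getElem _ _ (by simp; omega)]
    rw [List.getElem_drop]; congr 1; omega
  rw [e i2 (by omega) (by omega), e i3 (by omega) (by omega), e i4 (by omega) h4]
  exact sub3 _ _ _ _ (by omega) (by omega) (by simp; omega)

lemma relOrder3 (a b c : ℕ) (h1 : a < b) (h2 : b < c) : SameRelOrder [a, b, c] [1, 2, 3] := by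
  refine ⟨by simp, ?_⟩
  intro i j hi hj
  simp only [List.length_cons, List.length_nil] at hi hj
  interval_cases i <;> interval_cases j <;> simp [List.getD] <;> omega

lemma relOrder2413 (a b c d : ℕ) (h1 : c < a) (h2 : a < d) (h3 : d < b) :
    SameRelOrder [a, b, c, d] [2, 4, 1, 3] := by
  refine ⟨by simp, ?_⟩
  intro i j hi hj
  simp only [List.length_cons, List.length_nil] at hi hj
  interval_cases i <;> interval_cases j <;> simp [List.getD] <;> omega

lemma relOrder3412 (a b c d : ℕ) (h1 : c < d) (h2 : d < a) (h3 : a < b) :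
    SameRelOrder [a, b, c, d] [3, 4, 1, 2] := by
  refine ⟨by simp, ?_⟩
  intro i j hi hj
  simp only [List.length_cons, List.length_nil] at hi hj
  interval_cases i <;> interval_cases j <;> simp [List.getD] <;> omega

lemma contains123 (l : List ℕ) (i1 i2 i3 : ℕ) (h12 : i1 < i2) (h23 : i2 < i3)
    (h3 : i3 < l.length)
    (hv1 : l.getD i1 0 < l.getD i2 0) (hv2 : l.getD i2 0 < l.getD i3 0) :
    SeqContains l [1, 2, 3] :=
  ⟨_, sub3 l i1 i2 i3 h12 h23 h3, relOrder3 _ _ _ hv1 hv2⟩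

lemma contains2413 (l : List ℕ) (i1 i2 i3 i4 : ℕ) (h12 : i1 < i2) (h23 : i2 < i3)
    (h34 : i3 < i4) (h4 : i4 < l.length)
    (hv1 : l.getD i3 0 < l.getD i1 0) (hv2 : l.getD i1 0 < l.getD i4 0)
    (hv3 : l.getD i4 0 < l.getD i2 0) :
    SeqContains l [2, 4, 1, 3] :=
  ⟨_, sub4 l i1 i2 i3 i4 h12 h23 h34 h4, relOrder2413 _ _ _ _ hv1 hv2 hv3⟩

lemma contains3412 (l : List ℕ) (i1 i2 i3 i4 : ℕ) (h12 : i1 < i2) (h23 : i2 < i3)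
    (h34 : i3 < i4) (h4 : i4 < l.length)
    (hv1 : l.getD i3 0 < l.getD i4 0) (hv2 : l.getD i4 0 < l.getD i1 0)
    (hv3 : l.getD i1 0 < l.getD i2 0) :
    SeqContains l [3, 4, 1, 2] :=
  ⟨_, sub4 l i1 i2 i3 i4 h12 h23 h34 h4, relOrder3412 _ _ _ _ hv1 hv2 hv3⟩

lemma getD_inj (l : List ℕ) (hnd : l.Nodup) {i j : ℕ} (hi : i < l.length) (hj : j < l.length)
    (h : l.getD i 0 = l.getD j 0) : i = j := by
  rw [List.getD_eq_getElem _ _ hi, List.getD_eq_getElem _ _ hj] at h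
  exact (hnd.getElem_inj_iff).mp h

lemma ascent_unique (l : List ℕ) (hnd : l.Nodup)
    (h123 : ¬ SeqContains l [1, 2, 3]) (h2413 : ¬ SeqContains l [2, 4, 1, 3])
    (h3412 : ¬ SeqContains l [3, 4, 1, 2])
    {j j' : ℕ} (hjj : j < j') (hlen : j' + 1 < l.length)
    (ha : l.getD j 0 < l.getD (j + 1) 0) (ha' : l.getD j' 0 < l.getD (j' + 1) 0) : False := by
  rcases eq_or_lt_of_le (Nat.succ_le_of_lt hjj) with h | h
  · -- j + 1 = j'
    subst h
    exact h123 (contains123 l j (j + 1) (j + 1 + 1) (by omega) (by omega) (by omega) ha ha')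
  · -- j + 1 < j'
    have hca : l.getD j' 0 < l.getD j 0 := by
      rcases lt_trichotomy (l.getD j' 0) (l.getD j 0) with h1 | h1 | h1
      · exact h1
      · exact absurd (getD_inj l hnd (by omega) (by omega) h1) (by omega)
      · exact absurd (contains123 l j j' (j' + 1) (by omega) (by omega) (by omega) h1 ha') h123
    have hdb : l.getD (j' + 1) 0 < l.getD (j + 1) 0 := by
      rcases lt_trichotomy (l.getD (j' + 1) 0) (l.getD (j + 1) 0) with h1 | h1 | h1
      · exact h1
      · exact absurd (getD_inj l hnd (by omega) (by omega) h1) (by omega)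
      · exact absurd (contains123 l j (j + 1) (j' + 1) (by omega) (by omega) (by omega) ha h1)
          h123
    rcases lt_trichotomy (l.getD (j' + 1) 0) (l.getD j 0) with h1 | h1 | h1
    · exact h3412
        (contains3412 l j (j + 1) j' (j' + 1) (by omega) (by omega) (by omega) (by omega)
          ha' h1 ha)
    · exact absurd (getD_inj l hnd (by omega) (by omega) h1) (by omega)
    · exact h2413
        (contains2413 l j (j + 1) j' (j' + 1) (by omega) (by omega) (by omega) (by omega)
          hca h1 hdb)

/-- If `σ` is a restrictive permutation, then `σ` contains exactly one copy of the
Fishburn pattern `f`: there is exactly one pair of indices `(j, k)` with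
`j + 1 < k`, `σ j = σ k + 1`, and `σ (j+1) > σ j`. -/
theorem stmt12 (m : ℕ) (σ : List ℕ) (hσ : IsPermList m σ) (hr : Restrictive σ) :
    ∃! jk : ℕ × ℕ, jk.1 + 1 < jk.2 ∧ jk.2 < σ.length ∧
      σ.getD jk.1 0 = σ.getD jk.2 0 + 1 ∧ σ.getD jk.1 0 < σ.getD (jk.1 + 1) 0 := by
  obtain ⟨h123, ⟨j0, k0, hjk0, hk0, heq0, hasc0⟩, h2413, h3412⟩ := hr
  have hnd : σ.Nodup := (List.Perm.nodup_iff hσ).mpr (List.nodup_range' _ Nat.one_pos)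
  refine ⟨(j0, k0), ⟨hjk0, hk0, heq0, hasc0⟩, ?_⟩
  rintro ⟨j, k⟩ ⟨h1, h2, h3, h4⟩
  have h1' : j + 1 < k := h1
  have h2' : k < σ.length := h2
  have h3' : σ.getD j 0 = σ.getD k 0 + 1 := h3
  have h4' : σ.getD j 0 < σ.getD (j + 1) 0 := h4
  clear h1 h2 h3 h4
  have hj : j = j0 := by
    rcases lt_trichotomy j j0 with h | h | h
    · exact (ascent_unique σ hnd h123 h2413 h3412 h (by omega) h4' hasc0).elim
    · exact h
    · exact (ascent_unique σ hnd h123 h2413 h3412 h (by omega) hasc0 h4').elim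
  subst hj
  have hk : k = k0 := getD_inj σ hnd (by omega) (by omega) (by omega)
  subst hk
  rfl
end

section
/- Suppose n ≥ 2 and π is a Fishburn permutation of length n avoiding both 321 and 1423 which has a descent. Then either the left entry of the rightmost descent of π equals n, or π_n = n. -/
/-- `j` is a descent of `l` (0-indexed): `l j > l (j+1)`. -/
def IsDescent (l : List ℕ) (j : ℕ) : Prop :=
  j + 1 < l.length ∧ l.getD (j + 1) 0 < l.getD j 0


lemma triple_sublist {l : List ℕ} {p i : ℕ} (hpi : p < i) (hi : i + 1 < l.length) :
    List.Sublist [l[p]'(by omega), l[i]'(by omega), l[i+1]'hi] l := by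
  have h1 : List.Sublist [l[i]'(by omega), l[i+1]'hi] (l.drop i) := by
    rw [← List.getElem_cons_drop (by omega : i < l.length), ← List.getElem_cons_drop hi]
    exact ((List.nil_sublist _).cons₂ _).cons₂ _
  have h2 : List.Sublist (l.drop i) (l.drop (p + 1)) := by
    have h : l.drop i = (l.drop (p+1)).drop (i - (p+1)) := by
      rw [List.drop_drop]; congr 1; omega
    rw [h]; exact List.drop_sublist _ _
  have h3 : List.Sublist (l[p]'(by omega) :: l.drop (p+1)) l := by
    rw [List.getElem_cons_drop (by omega : p < l.length)]; exact List.drop_sublist _ _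
  exact ((h1.trans h2).cons₂ _).trans h3

/-- Suppose `n ≥ 2` and `π ∈ F_n(321, 1423)` has a descent.  Then either `n` is the
left entry of the rightmost descent of `π`, or the last entry of `π` is `n`. -/
theorem stmt14 (n : ℕ) (hn : 2 ≤ n) (π : List ℕ)
    (hπ : π ∈ FishburnSet n [[3, 2, 1], [1, 4, 2, 3]])
    (hdes : ∃ j, IsDescent π j) :
    (∃ j, IsDescent π j ∧ (∀ i, IsDescent π i → i ≤ j) ∧ π.getD j 0 = n) ∨
      π.getD (n - 1) 0 = n := by
  obtain ⟨hperm, hfish, havoid⟩ := hπ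
  have hlen : π.length = n := by
    have := hperm.length_eq; simpa using this
  have hnodup : π.Nodup := hperm.nodup_iff.mpr List.nodup_range'
  have hmem : n ∈ π := hperm.mem_iff.mpr (List.mem_range'_1.mpr ⟨by omega, by omega⟩)
  have hbd : ∀ i, (h : i < π.length) → π[i] ≤ n := by
    intro i h
    have : π[i] ∈ List.range' 1 n := hperm.mem_iff.mp (List.getElem_mem h)
    simp [List.mem_range'] at this; omega
  obtain ⟨p, hp, hpe⟩ := List.getElem_of_mem hmem
  by_cases hpl : p = n - 1
  · right
    subst hpl
    rw [List.getD_eq_getElem π 0 (by omega)]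
    exact hpe
  · left
    have hp1 : p + 1 < π.length := by omega
    have hne : ∀ i, (h : i < π.length) → i ≠ p → π[i] < n := by
      intro i h hip
      have h1 := hbd i h
      have h2 : π[i] ≠ n := by
        intro he
        exact hip (List.Nodup.getElem_inj_iff hnodup |>.mp (by rw [he, hpe]))
      omega
    refine ⟨p, ⟨hp1, ?_⟩, ?_, ?_⟩
    · rw [List.getD_eq_getElem π 0 hp1, List.getD_eq_getElem π 0 hp, hpe]
      exact hne (p+1) hp1 (by omega)
    · intro i ⟨hi1, hi2⟩
      by_contra hip
      push_neg at hip
      apply havoid [3,2,1] (by simp)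
      rw [List.getD_eq_getElem π 0 hi1, List.getD_eq_getElem π 0 (by omega)] at hi2
      refine ⟨[π[p], π[i]'(by omega), π[i+1]'hi1], triple_sublist hip hi1, ?_, ?_⟩
      · simp
      · intro a b ha hb
        have e1 : π[i]'(by omega) < n := hne i (by omega) (by omega)
        simp only [List.length_cons, List.length_nil] at ha hb
        interval_cases a <;> interval_cases b <;>
          simp [List.getD_cons_zero, List.getD_cons_succ, hpe] <;> omega
    · rw [List.getD_eq_getElem π 0 hp]; exact hpe
end

section
/- Suppose n ≥ 3 and π is a Fishburn permutation of length n avoiding both 321 and 3124 which contains the pattern 312. Then π has a descent, and the left entry of the rightmost descent of π equals n. -/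
lemma sro321 {x y z : ℕ} (h1 : z < y) (h2 : y < x) : SameRelOrder [x, y, z] [3, 2, 1] := by
  refine ⟨rfl, fun i j hi hj => ?_⟩
  simp only [List.length_cons, List.length_nil] at hi hj
  interval_cases i <;> interval_cases j <;>
    simp [List.getD_cons_zero, List.getD_cons_succ] <;> omega

lemma sro3124 {x y z w : ℕ} (h1 : y < z) (h2 : z < x) (h3 : x < w) :
    SameRelOrder [x, y, z, w] [3, 1, 2, 4] := by
  refine ⟨rfl, fun i j hi hj => ?_⟩
  simp only [List.length_cons, List.length_nil] at hi hj
  interval_cases i <;> interval_cases j <;>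
    simp [List.getD_cons_zero, List.getD_cons_succ] <;> omega

/-- Suppose `n ≥ 3` and `π ∈ F_n(321, 3124)` contains the pattern 312.  Then `π` has
a descent, and the left entry of the rightmost descent of `π` equals `n`. -/
theorem stmt17 (n : ℕ) (hn : 3 ≤ n) (π : List ℕ)
    (hπ : π ∈ FishburnSet n [[3, 2, 1], [3, 1, 2, 4]])
    (h312 : SeqContains π [3, 1, 2]) :
    ∃ j, IsDescent π j ∧ (∀ i, IsDescent π i → i ≤ j) ∧ π.getD j 0 = n := by
  classical
  obtain ⟨hperm, _hfish, havoid⟩ := hπ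
  have h321 : ¬ SeqContains π [3, 2, 1] := havoid _ (by simp)
  have h3124 : ¬ SeqContains π [3, 1, 2, 4] := havoid _ (by simp)
  have hlen : π.length = n := by
    simpa using hperm.length_eq
  have hnodup : π.Nodup := hperm.nodup_iff.mpr (List.nodup_range' (s := 1) (n := n))
  have hub : ∀ i, (h : i < π.length) → π[i] ≤ n := by
    intro i h
    have : π[i] ∈ π := List.getElem_mem h
    have := hperm.subset this
    rw [List.mem_range'] at this
    omega
  -- extract the 312 copy
  obtain ⟨γ, hsub, hrel⟩ := h312
  have hγ3 : γ.length = 3 := by simpa using hrel.1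
  obtain ⟨x, y, z, rfl⟩ := List.length_eq_three.mp hγ3
  have hyz : y < z := by
    have := (hrel.2 1 2 (by simp) (by simp)).mpr
    simp [List.getD_cons_zero, List.getD_cons_succ] at this
    exact this
  have hzx : z < x := by
    have := (hrel.2 2 0 (by simp) (by simp)).mpr
    simp [List.getD_cons_zero, List.getD_cons_succ] at this
    exact this
  -- there is a descent
  have hdesc_ex : ∃ i, IsDescent π i := by
    by_contra hcon
    push_neg at hcon
    have mono : ∀ i j, i ≤ j → j < π.length → π.getD i 0 ≤ π.getD j 0 := by
      intro i j hij
      induction j, hij using Nat.le_induction with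
      | base => intro _; exact le_refl _
      | succ j hij ih =>
        intro hj1
        have h1 : j < π.length := Nat.lt_of_succ_lt hj1
        have h2 := ih h1
        have hnd := hcon j
        simp only [IsDescent, not_and, not_lt] at hnd
        have := hnd hj1
        omega
    have hpw : π.Pairwise (· ≤ ·) := by
      rw [List.pairwise_iff_getElem]
      intro a b ha hb hab
      have := mono a b (le_of_lt hab) hb
      rwa [List.getD_eq_getElem _ _ (lt_trans hab hb), List.getD_eq_getElem _ _ hb] at this
    have hps : ([x, y, z] : List ℕ).Pairwise (· ≤ ·) := hpw.sublist hsub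
    simp at hps
    omega
  obtain ⟨i0, hi0⟩ := hdesc_ex
  -- rightmost descent
  set S := (Finset.range π.length).filter (fun i => IsDescent π i) with hS
  have hSne : S.Nonempty := ⟨i0, by
    simp only [hS, Finset.mem_filter, Finset.mem_range]
    exact ⟨by have := hi0.1; omega, hi0⟩⟩
  set j := S.max' hSne with hj
  have hjd : IsDescent π j := (Finset.mem_filter.mp (S.max'_mem hSne)).2
  have hjmax : ∀ i, IsDescent π i → i ≤ j := by
    intro i hi
    exact S.le_max' i (Finset.mem_filter.mpr ⟨Finset.mem_range.mpr (by have := hi.1; omega), hi⟩)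
  have hj1 : j + 1 < π.length := hjd.1
  have hjlt : j < π.length := Nat.lt_of_succ_lt hj1
  have hdval : π[j + 1] < π[j] := by
    have := hjd.2
    rwa [List.getD_eq_getElem _ _ hj1, List.getD_eq_getElem _ _ hjlt] at this
  -- position of n
  have hnmem : n ∈ π := by
    rw [hperm.mem_iff, List.mem_range']
    exact ⟨n - 1, by omega, by omega⟩
  obtain ⟨p, hp, hpn⟩ := List.getElem_of_mem hnmem
  rcases lt_trichotomy p j with hpj | hpj | hpj
  · -- n before j : gives a 321 pattern, contradiction
    exfalso
    apply h321
    refine ⟨[π[p], π[j], π[j + 1]], ?_, ?_⟩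
    · have := List.map_getElem_sublist (l := π)
          (is := [⟨p, hp⟩, ⟨j, hjlt⟩, ⟨j + 1, hj1⟩]) (by
        refine List.Pairwise.cons ?_ (List.Pairwise.cons ?_ (List.pairwise_singleton _ _)) <;>
          intro b hb <;> rcases List.mem_cons.mp hb with rfl | hb <;>
            simp_all [Fin.lt_def] <;> omega)
      simpa using this
    · refine sro321 hdval ?_
      have hne : π[j] ≠ π[p] := fun h => by
        have := hnodup.getElem_inj_iff.mp h; omega
      have := hub j hjlt
      rw [hpn] at hne
      omega
  · -- n at j : done
    refine ⟨j, hjd, hjmax, ?_⟩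
    rw [List.getD_eq_getElem _ _ hjlt]
    subst hpj
    exact hpn
  · -- n after j : n must be the last entry, gives 3124, contradiction
    exfalso
    have hxlen : x ≤ n := by
      have hx : x ∈ π := hsub.subset (by simp)
      have := hperm.subset hx
      rw [List.mem_range'] at this
      omega
    have hpne1 : p ≠ j + 1 := by
      intro h
      subst h
      rw [hpn] at hdval
      have := hub j hjlt
      omega
    have hplast : p + 1 = π.length := by
      by_contra hcon
      have hplt : p + 1 < π.length := by omega
      have hdescp : IsDescent π p := by
        refine ⟨hplt, ?_⟩
        rw [List.getD_eq_getElem _ _ hplt, List.getD_eq_getElem _ _ hp, hpn]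
        have h1 := hub (p + 1) hplt
        have h2 : π[p + 1] ≠ π[p] := fun h => by
          have := hnodup.getElem_inj_iff.mp h; omega
        rw [hpn] at h2
        omega
      have := hjmax p hdescp
      omega
    have hsplit : π.take p ++ [n] = π := by
      have h1 := List.take_concat_get hp
      rw [hplast, List.take_length] at h1
      simpa [hpn] using h1
    have hsub' : ([x, y, z] : List ℕ).Sublist (π.take p) := by
      have h1 : ([x, y, z] : List ℕ).Sublist (π.take p ++ [n]) := by
        rw [hsplit]; exact hsub
      have h2 := h1.reverse
      simp only [List.reverse_append, List.reverse_cons, List.reverse_nil, List.nil_append,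
        List.cons_append, List.singleton_append] at h2
      rcases List.sublist_cons_iff.mp h2 with h3 | ⟨r, hr, _⟩
      · simpa using h3.reverse
      · exfalso
        have hz : z = n := by
          have := congrArg (fun l => l.headD 0) hr
          simpa using this
        omega
    have hnnot : n ∉ π.take p := by
      have hnd : (π.take p ++ [n]).Nodup := by rw [hsplit]; exact hnodup
      have := List.disjoint_of_nodup_append hnd
      intro hmem
      exact this hmem (by simp)
    have hxn : x < n := by
      have hx : x ∈ π.take p := hsub'.subset (by simp)
      rcases lt_or_eq_of_le hxlen with h | h
      · exact h
      · exact absurd (h ▸ hx) hnnot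
    apply h3124
    refine ⟨[x, y, z, n], ?_, sro3124 hyz hzx hxn⟩
    have : ([x, y, z] ++ [n] : List ℕ).Sublist (π.take p ++ [n]) :=
      hsub'.append (List.Sublist.refl _)
    rw [hsplit] at this
    simpa using this
end

section
/- For all n ≥ 1 and all k ≥ 1, the number of Fishburn permutations of length n which avoid both 321 and 2143 and have exactly k left-to-right maxima is the binomial coefficient C(n−1, k−1). In particular, |F_n(321, 2143)| = 2^{n−1} for all n ≥ 1. -/
set_option linter.unusedSectionVars false



/-- The number of inversions of `l`: pairs `(j, k)` with `j < k` and `l j > l k`. -/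
def invList (l : List ℕ) : ℕ :=
  ((Finset.range l.length ×ˢ Finset.range l.length).filter
    (fun p => p.1 < p.2 ∧ l.getD p.2 0 < l.getD p.1 0)).card

/-- The number of left-to-right maxima of `l`. -/
def ltormaxList (l : List ℕ) : ℕ :=
  ((Finset.range l.length).filter
    (fun j => ∀ i ∈ Finset.range j, l.getD i 0 < l.getD j 0)).card


namespace Stmt19

variable (n : ℕ) (S : Finset ℕ)

/-- least element not in `S` -/
noncomputable def rr : ℕ := sInf {m | m ∉ S}

def sig (j : ℕ) : ℕ := (S.filter (· ≤ j)).card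

def nu (j : ℕ) : ℕ := ((Finset.range (j+1)).filter (· ∉ S)).card

noncomputable def fval (j : ℕ) : ℕ :=
  if j + 1 < rr S then j + 1
  else if j ∈ S then n - S.card + sig S j
  else rr S - 1 + nu S j

noncomputable def fperm : List ℕ := (List.range n).map (fval n S)

section basic
variable (h0 : 0 ∈ S) (hS : S ⊆ Finset.range n)

lemma compl_ne : {m | m ∉ S}.Nonempty := by
  obtain ⟨a, ha⟩ := Infinite.exists_notMem_finset S
  exact ⟨a, ha⟩

lemma mem_of_lt_rr {m : ℕ} (h : m < rr S) : m ∈ S := by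
  by_contra hm
  have : rr S ≤ m := Nat.sInf_le (s := {m | m ∉ S}) hm
  omega

lemma rr_not_mem : rr S ∉ S := Nat.sInf_mem (compl_ne S)

include h0 in
lemma rr_pos : 0 < rr S := by
  rcases Nat.eq_zero_or_pos (rr S) with h | h
  · exact absurd (h ▸ rr_not_mem S) (by simpa using h0)
  · exact h

include hS in
lemma rr_le : rr S ≤ n := Nat.sInf_le (by simpa using fun hn => by simpa using hS hn)

lemma range_rr_subset : Finset.range (rr S) ⊆ S := by
  intro m hm
  exact mem_of_lt_rr S (Finset.mem_range.mp hm)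


lemma rr_le_card : rr S ≤ S.card := by
  simpa using Finset.card_le_card (range_rr_subset S)

include hS in
lemma card_le : S.card ≤ n := by simpa using Finset.card_le_card hS

end basic

section counts
variable (h0 : 0 ∈ S) (hS : S ⊆ Finset.range n)

lemma sig_mono {i j : ℕ} (h : i ≤ j) : sig S i ≤ sig S j :=
  Finset.card_le_card (fun x hx => by
    simp only [Finset.mem_filter] at hx ⊢; exact ⟨hx.1, hx.2.trans h⟩)

lemma sig_lt {i j : ℕ} (h : i < j) (hj : j ∈ S) : sig S i < sig S j := by
  apply Finset.card_lt_card
  constructor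
  · intro x hx
    simp only [Finset.mem_filter] at hx ⊢; exact ⟨hx.1, by omega⟩
  · intro hsub
    have := hsub (Finset.mem_filter.mpr ⟨hj, by omega⟩)
    simp only [Finset.mem_filter] at this; omega

include h0 in
lemma sig_pos (j : ℕ) : 1 ≤ sig S j :=
  Finset.card_pos.mpr ⟨0, Finset.mem_filter.mpr ⟨h0, by omega⟩⟩

lemma sig_le_card (j : ℕ) : sig S j ≤ S.card :=
  Finset.card_le_card (Finset.filter_subset _ _)

include h0 in
lemma sig_rr_sub_one : sig S (rr S - 1) = rr S := by
  have h1 : S.filter (· ≤ rr S - 1) = Finset.range (rr S) := by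
    ext x
    simp only [Finset.mem_filter, Finset.mem_range]
    constructor
    · rintro ⟨hxS, hx⟩
      have hrr : rr S ∉ S := rr_not_mem S
      have : x ≠ rr S := fun h => hrr (h ▸ hxS)
      have h0' : 0 < rr S := rr_pos S h0
      omega
    · intro hx
      exact ⟨mem_of_lt_rr S hx, by omega⟩
  rw [sig, h1, Finset.card_range]

include h0 in
lemma sig_ge_rr {j : ℕ} (hj : rr S - 1 ≤ j) : rr S ≤ sig S j :=
  sig_rr_sub_one S h0 ▸ sig_mono S hj

lemma nu_mono {i j : ℕ} (h : i ≤ j) : nu S i ≤ nu S j :=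
  Finset.card_le_card (fun x hx => by
    simp only [Finset.mem_filter, Finset.mem_range] at hx ⊢
    exact ⟨by omega, hx.2⟩)

lemma nu_lt {i j : ℕ} (h : i < j) (hj : j ∉ S) : nu S i < nu S j := by
  apply Finset.card_lt_card
  constructor
  · intro x hx
    simp only [Finset.mem_filter, Finset.mem_range] at hx ⊢
    exact ⟨by omega, hx.2⟩
  · intro hsub
    have := hsub (Finset.mem_filter.mpr ⟨Finset.mem_range.mpr (by omega), hj⟩)
    simp only [Finset.mem_filter, Finset.mem_range] at this; omega

lemma nu_pos {j : ℕ} (hj : j ∉ S) : 1 ≤ nu S j :=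
  Finset.card_pos.mpr ⟨j, Finset.mem_filter.mpr ⟨Finset.mem_range.mpr (by omega), hj⟩⟩

include hS in
lemma nu_le {j : ℕ} (hj : j < n) : nu S j ≤ n - S.card := by
  have h1 : nu S j ≤ ((Finset.range n).filter (· ∉ S)).card :=
    Finset.card_le_card (fun x hx => by
      simp only [Finset.mem_filter, Finset.mem_range] at hx ⊢
      exact ⟨by omega, hx.2⟩)
  have h2 : (Finset.range n).filter (· ∉ S) = Finset.range n \ S := by
    ext x; simp [Finset.mem_sdiff, and_comm]
  rw [h2, Finset.card_sdiff_of_subset hS, Finset.card_range] at h1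
  exact h1

end counts

section fval
variable (h0 : 0 ∈ S) (hS : S ⊆ Finset.range n)

lemma fval_c1 {j : ℕ} (h : j + 1 < rr S) : fval n S j = j + 1 := if_pos h

lemma fval_c2 {j : ℕ} (hj : j ∈ S) (h : ¬ j + 1 < rr S) :
    fval n S j = n - S.card + sig S j := by rw [fval, if_neg h, if_pos hj]

lemma not_c1_of_not_mem {j : ℕ} (hj : j ∉ S) : ¬ j + 1 < rr S :=
  fun h => hj (mem_of_lt_rr S (by omega))

lemma fval_c3 {j : ℕ} (hj : j ∉ S) : fval n S j = rr S - 1 + nu S j := by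
  rw [fval, if_neg (not_c1_of_not_mem S hj), if_neg hj]

include h0 hS in
lemma fval_c2_ge {j : ℕ} (hj : j ∈ S) (h : ¬ j + 1 < rr S) :
    n - S.card + rr S ≤ fval n S j := by
  rw [fval_c2 n S hj h]
  have := sig_ge_rr S h0 (j := j) (by omega)
  omega

include hS in
lemma fval_c2_le {j : ℕ} (hj : j ∈ S) (h : ¬ j + 1 < rr S) : fval n S j ≤ n := by
  rw [fval_c2 n S hj h]
  have h1 := sig_le_card S j
  have h2 := card_le n S hS
  omega

lemma fval_c3_ge {j : ℕ} (hj : j ∉ S) : rr S ≤ fval n S j := by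
  rw [fval_c3 n S hj]
  have h1 := nu_pos S hj
  have h2 := rr_le_card S
  omega

include h0 hS in
lemma fval_c3_le {j : ℕ} (hj : j ∉ S) (hjn : j < n) :
    fval n S j + 1 ≤ n - S.card + rr S := by
  rw [fval_c3 n S hj]
  have h0' := rr_pos S h0
  have h1 := nu_le n S hS hjn
  have h2 := rr_le_card S
  have h3 := card_le n S hS
  omega

include h0 hS in
lemma fval_c3_lt_c2 {i j : ℕ} (hi : i ∉ S) (hin : i < n) (hj : j ∈ S)
    (h : ¬ j + 1 < rr S) : fval n S i < fval n S j := by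
  have h1 := fval_c3_le n S h0 hS hi hin
  have h2 := fval_c2_ge n S h0 hS hj h
  omega

include h0 in
lemma fval_c1_lt {i j : ℕ} (hi : i + 1 < rr S) (hj : ¬ j + 1 < rr S) :
    fval n S i < fval n S j := by
  rw [fval_c1 n S hi]
  by_cases hjS : j ∈ S
  · have := fval_c2 n S hjS hj
    have h1 := sig_ge_rr S h0 (j := j) (by omega)
    have h2 := rr_le_card S
    have h3 := sig_le_card S j
    -- n - card + sig ≥ n - card + rr ≥ rr > i + 1?  need i+1 ≤ rr-1 < rr ≤ n-card+rr
    omega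
  · have := fval_c3_ge n S hjS
    omega

include h0 hS in
lemma fval_mono_mem {i j : ℕ} (hij : i < j) (hj : j ∈ S) : fval n S i < fval n S j := by
  by_cases hj1 : j + 1 < rr S
  · rw [fval_c1 n S (by omega), fval_c1 n S hj1]; omega
  · by_cases hi1 : i + 1 < rr S
    · exact fval_c1_lt n S h0 hi1 hj1
    · by_cases hiS : i ∈ S
      · rw [fval_c2 n S hiS hi1, fval_c2 n S hj hj1]
        have := sig_lt S hij hj
        omega
      · exact fval_c3_lt_c2 n S h0 hS hiS (by
          have := hS hj; simp only [Finset.mem_range] at this; omega) hj hj1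

lemma fval_mono_not_mem {i j : ℕ} (hij : i < j) (hi : i ∉ S) (hj : j ∉ S) :
    fval n S i < fval n S j := by
  rw [fval_c3 n S hi, fval_c3 n S hj]
  have := nu_lt S hij hj
  omega

include h0 hS in
lemma fval_inv {i j : ℕ} (hij : i < j) (hjn : j < n) (h : fval n S j < fval n S i) :
    i ∈ S ∧ ¬ i + 1 < rr S ∧ j ∉ S := by
  by_cases hjS : j ∈ S
  · exact absurd (fval_mono_mem n S h0 hS hij hjS) (by omega)
  · by_cases hiS : i ∈ S
    · by_cases hi1 : i + 1 < rr S
      · exact absurd (fval_c1_lt n S h0 hi1 (not_c1_of_not_mem S hjS)) (by omega)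
      · exact ⟨hiS, hi1, hjS⟩
    · exact absurd (fval_mono_not_mem n S hij hiS hjS) (by omega)

include h0 hS in
lemma fval_inj {i j : ℕ} (hin : i < n) (hjn : j < n) (h : fval n S i = fval n S j) :
    i = j := by
  rcases lt_trichotomy i j with hij | hij | hij
  · by_cases hjS : j ∈ S
    · exact absurd (fval_mono_mem n S h0 hS hij hjS) (by omega)
    · by_cases hiS : i ∈ S
      · by_cases hi1 : i + 1 < rr S
        · exact absurd (fval_c1_lt n S h0 hi1 (not_c1_of_not_mem S hjS)) (by omega)
        · exact absurd (fval_c3_lt_c2 n S h0 hS hjS hjn hiS hi1) (by omega)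
      · exact absurd (fval_mono_not_mem n S hij hiS hjS) (by omega)
  · exact hij
  · by_cases hiS : i ∈ S
    · exact absurd (fval_mono_mem n S h0 hS hij hiS) (by omega)
    · by_cases hjS : j ∈ S
      · by_cases hj1 : j + 1 < rr S
        · exact absurd (fval_c1_lt n S h0 hj1 (not_c1_of_not_mem S hiS)) (by omega)
        · exact absurd (fval_c3_lt_c2 n S h0 hS hiS hin hjS hj1) (by omega)
      · exact absurd (fval_mono_not_mem n S hij hjS hiS) (by omega)

include h0 hS in
lemma fval_pos (j : ℕ) : 1 ≤ fval n S j := by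
  by_cases h1 : j + 1 < rr S
  · rw [fval_c1 n S h1]; omega
  · by_cases hj : j ∈ S
    · have := fval_c2_ge n S h0 hS hj h1
      have := rr_pos S h0
      omega
    · have := fval_c3_ge n S hj
      have := rr_pos S h0
      omega

include h0 hS in
lemma fval_le {j : ℕ} (hj : j < n) : fval n S j ≤ n := by
  by_cases h1 : j + 1 < rr S
  · rw [fval_c1 n S h1]
    have := rr_le n S hS
    omega
  · by_cases hjS : j ∈ S
    · exact fval_c2_le n S hS hjS h1
    · have h2 := fval_c3_le n S h0 hS hjS hj
      have := rr_le_card S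
      have := card_le n S hS
      omega

include h0 hS in
lemma fval_ltr_mem {j : ℕ} (hj : j ∈ S) : ∀ i, i < j → fval n S i < fval n S j :=
  fun _ hi => fval_mono_mem n S h0 hS hi hj

include h0 hS in
lemma fval_ltr_not_mem {j : ℕ} (hj : j ∉ S) (hjn : j < n) :
    ∃ i, i < j ∧ fval n S j < fval n S i := by
  have hrpos := rr_pos S h0
  have hrj : rr S ≤ j := by
    by_contra h
    exact hj (mem_of_lt_rr S (by omega))
  refine ⟨rr S - 1, by omega, ?_⟩
  have hmem : rr S - 1 ∈ S := mem_of_lt_rr S (by omega)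
  have h2 := fval_c2_ge n S h0 hS hmem (by omega)
  have h3 := fval_c3_le n S h0 hS hj (by
    have := rr_le n S hS; omega)
  omega

end fval

section listlevel
variable (h0 : 0 ∈ S) (hS : S ⊆ Finset.range n)

lemma fperm_length : (fperm n S).length = n := by simp [fperm]

lemma fperm_getD {j : ℕ} (hj : j < n) : (fperm n S).getD j 0 = fval n S j := by
  rw [fperm, List.getD_eq_getElem _ _ (by simpa using hj)]
  simp

lemma nu_rr : nu S (rr S) = 1 := by
  have h1 : (Finset.range (rr S + 1)).filter (· ∉ S) = {rr S} := by
    ext x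
    simp only [Finset.mem_filter, Finset.mem_range, Finset.mem_singleton]
    constructor
    · rintro ⟨hx1, hx2⟩
      by_contra hne
      exact hx2 (mem_of_lt_rr S (by omega))
    · rintro rfl
      exact ⟨by omega, rr_not_mem S⟩
  rw [nu, h1, Finset.card_singleton]

include h0 hS in
lemma fperm_fishburn : FishburnFree (fperm n S) := by
  rintro ⟨j, k, hjk, hk, h3, h4⟩
  rw [fperm_length] at hk
  have hj : j < n := by omega
  have hj1 : j + 1 < n := by omega
  rw [fperm_getD n S hj, fperm_getD n S hk] at h3
  rw [fperm_getD n S hj, fperm_getD n S hj1] at h4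
  have hrpos := rr_pos S h0
  have hrc := rr_le_card S
  have hcn := card_le n S hS
  have hkpos := fval_pos n S h0 hS k
  by_cases hc1 : j + 1 < rr S
  · -- case 1 : fval j = j + 1
    rw [fval_c1 n S hc1] at h3
    have hkval : fval n S k = j := by omega
    have hjpos : 0 < j := by omega
    by_cases hk1 : k + 1 < rr S
    · rw [fval_c1 n S hk1] at hkval; omega
    · by_cases hkS : k ∈ S
      · have := fval_c2_ge n S h0 hS hkS hk1; omega
      · have := fval_c3_ge n S hkS; omega
  · by_cases hjS : j ∈ S
    · -- case 2
      rw [fval_c2 n S hjS hc1] at h3 h4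
      have hsig := sig_ge_rr S h0 (j := j) (by omega)
      by_cases hsg : rr S + 1 ≤ sig S j
      · -- k must be case 2 as well
        by_cases hk1 : k + 1 < rr S
        · rw [fval_c1 n S hk1] at h3; omega
        · by_cases hkS : k ∈ S
          · rw [fval_c2 n S hkS hk1] at h3
            have hsl := sig_lt S (show j < k by omega) hkS
            have := sig_le_card S j
            omega
          · have := fval_c3_le n S h0 hS hkS hk; omega
      · -- sig S j = rr S , so j = rr S - 1
        have hsj : sig S j = rr S := by omega
        have hjr : j = rr S - 1 := by
          by_contra hne
          have hlt := sig_lt S (show rr S - 1 < j by omega) hjS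
          rw [sig_rr_sub_one S h0] at hlt
          omega
        have hj1r : j + 1 = rr S := by omega
        have hrnotS : rr S ∉ S := rr_not_mem S
        rw [show j + 1 = rr S from hj1r, fval_c3 n S hrnotS, nu_rr S] at h4
        omega
    · -- case 3
      rw [fval_c3 n S hjS] at h3
      have hnuj := nu_pos S hjS
      by_cases hnu2 : 2 ≤ nu S j
      · by_cases hk1 : k + 1 < rr S
        · rw [fval_c1 n S hk1] at h3; omega
        · by_cases hkS : k ∈ S
          · have := fval_c2_ge n S h0 hS hkS hk1
            have := nu_le n S hS hj
            omega
          · rw [fval_c3 n S hkS] at h3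
            have := nu_lt S (show j < k by omega) hkS
            omega
      · -- nu S j = 1, fval k = rr S - 1
        have hnu1 : nu S j = 1 := by omega
        by_cases hk1 : k + 1 < rr S
        · rw [fval_c1 n S hk1] at h3
          have hjr : rr S ≤ j := by
            by_contra hh; exact hjS (mem_of_lt_rr S (by omega))
          omega
        · by_cases hkS : k ∈ S
          · have := fval_c2_ge n S h0 hS hkS hk1; omega
          · have := fval_c3_ge n S hkS; omega

include h0 hS in
lemma fperm_nodup : (fperm n S).Nodup := by
  rw [fperm]
  apply List.Nodup.map_on _ (List.nodup_range (n := n))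
  intro x hx y hy hxy
  exact fval_inj n S h0 hS (List.mem_range.mp hx) (List.mem_range.mp hy) hxy

include h0 hS in
lemma fperm_perm : IsPermList n (fperm n S) := by
  rw [IsPermList]
  apply List.Subperm.perm_of_length_le
  · apply List.subperm_of_subset (fperm_nodup n S h0 hS)
    intro x hx
    rw [fperm, List.mem_map] at hx
    obtain ⟨j, hj, rfl⟩ := hx
    rw [List.mem_range] at hj
    rw [List.mem_range'_1]
    exact ⟨fval_pos n S h0 hS j, by have := fval_le n S h0 hS hj; omega⟩
  · simp [fperm_length]

/-- helper: extract indexed values from a sublist -/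
lemma sublist_index {l γ : List ℕ} (h : γ.Sublist l) :
    ∃ g : ℕ → ℕ, StrictMono g ∧ ∀ i, i < γ.length → g i < l.length ∧
      l.getD (g i) 0 = γ.getD i 0 := by
  obtain ⟨f, hf⟩ := List.sublist_iff_exists_orderEmbedding_getElem?_eq.mp h
  refine ⟨f, f.strictMono, fun i hi => ?_⟩
  have := hf i
  rw [List.getElem?_eq_getElem hi] at this
  obtain ⟨hlt, hval⟩ := List.getElem?_eq_some_iff.mp this.symm
  refine ⟨hlt, ?_⟩
  rw [List.getD_eq_getElem _ _ hlt, hval, List.getD_eq_getElem _ _ hi]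

/-- helper: build a sublist from increasing indices -/
lemma index_sublist_aux (l : List ℕ) :
    ∀ (is : List ℕ) (s : ℕ), is.Pairwise (· < ·) → (∀ i ∈ is, s ≤ i ∧ i < l.length) →
      (is.map (fun i => l.getD i 0)).Sublist (l.drop s)
  | [], s, _, _ => List.nil_sublist _
  | a :: tl, s, hp, hb => by
    rw [List.map_cons]
    have ha := hb a (by simp)
    have h1 : l.drop a = l.getD a 0 :: l.drop (a + 1) := by
      rw [List.drop_eq_getElem_cons ha.2, List.getD_eq_getElem l 0 ha.2]
    have h2 : (tl.map (fun i => l.getD i 0)).Sublist (l.drop (a + 1)) := by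
      apply index_sublist_aux l tl (a+1) (List.Pairwise.sublist (List.sublist_cons_self a tl) hp)
      intro i hi
      exact ⟨(List.pairwise_cons.mp hp).1 i hi, (hb i (by simp [hi])).2⟩
    have h3 : (l.getD a 0 :: tl.map (fun i => l.getD i 0)).Sublist (l.drop a) := by
      rw [h1]
      exact h2.cons₂ _
    exact h3.trans (List.drop_sublist_drop_left l ha.1)

lemma index_sublist (l : List ℕ) (is : List ℕ) (hmono : is.Pairwise (· < ·))
    (hlt : ∀ i ∈ is, i < l.length) : (is.map (fun i => l.getD i 0)).Sublist l := by
  have := index_sublist_aux l is 0 hmono (fun i hi => ⟨Nat.zero_le _, hlt i hi⟩)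
  simpa using this

include h0 hS in
lemma fperm_avoid321 : ¬ SeqContains (fperm n S) [3, 2, 1] := by
  rintro ⟨γ, hsub, hlen, hrel⟩
  replace hlen : γ.length = 3 := by simpa using hlen
  obtain ⟨g, hg, hgv⟩ := sublist_index hsub
  have h0' := hgv 0 (by omega)
  have h1' := hgv 1 (by omega)
  have h2' := hgv 2 (by omega)
  rw [fperm_length] at h0' h1' h2'
  rw [fperm_getD n S h0'.1] at h0'
  rw [fperm_getD n S h1'.1] at h1'
  rw [fperm_getD n S h2'.1] at h2'
  have e01 : γ.getD 1 0 < γ.getD 0 0 := by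
    have := (hrel 1 0 (by omega) (by omega)).mpr (by norm_num)
    exact this
  have e12 : γ.getD 2 0 < γ.getD 1 0 := by
    have := (hrel 2 1 (by omega) (by omega)).mpr (by norm_num)
    exact this
  have hg01 : g 0 < g 1 := hg (by omega)
  have hg12 : g 1 < g 2 := hg (by omega)
  have i01 := fval_inv n S h0 hS hg01 h1'.1 (by omega)
  have i12 := fval_inv n S h0 hS hg12 h2'.1 (by omega)
  exact i01.2.2 i12.1

include h0 hS in
lemma fperm_avoid2143 : ¬ SeqContains (fperm n S) [2, 1, 4, 3] := by
  rintro ⟨γ, hsub, hlen, hrel⟩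
  replace hlen : γ.length = 4 := by simpa using hlen
  obtain ⟨g, hg, hgv⟩ := sublist_index hsub
  have h0' := hgv 0 (by omega)
  have h1' := hgv 1 (by omega)
  have h2' := hgv 2 (by omega)
  have h3' := hgv 3 (by omega)
  rw [fperm_length] at h0' h1' h2' h3'
  rw [fperm_getD n S h0'.1] at h0'
  rw [fperm_getD n S h1'.1] at h1'
  rw [fperm_getD n S h2'.1] at h2'
  rw [fperm_getD n S h3'.1] at h3'
  have e10 : γ.getD 1 0 < γ.getD 0 0 := (hrel 1 0 (by omega) (by omega)).mpr (by norm_num)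
  have e32 : γ.getD 3 0 < γ.getD 2 0 := (hrel 3 2 (by omega) (by omega)).mpr (by norm_num)
  have e03 : γ.getD 0 0 < γ.getD 3 0 := (hrel 0 3 (by omega) (by omega)).mpr (by norm_num)
  have hg01 : g 0 < g 1 := hg (by omega)
  have hg23 : g 2 < g 3 := hg (by omega)
  have i01 := fval_inv n S h0 hS hg01 h1'.1 (by omega)
  have i23 := fval_inv n S h0 hS hg23 h3'.1 (by omega)
  -- g 0 is case 2, g 3 is case 3: fval (g 3) < fval (g 0), contradicting e03
  have hge := fval_c2_ge n S h0 hS i01.1 i01.2.1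
  have hle := fval_c3_le n S h0 hS i23.2.2 h3'.1
  omega

/-- the set of positions of left-to-right maxima -/
def maxpos (l : List ℕ) : Finset ℕ :=
  (Finset.range l.length).filter (fun j => ∀ i ∈ Finset.range j, l.getD i 0 < l.getD j 0)

lemma ltormax_eq_card_maxpos (l : List ℕ) : ltormaxList l = (maxpos l).card := rfl

include h0 hS in
lemma fperm_maxpos : maxpos (fperm n S) = S := by
  ext j
  rw [maxpos, Finset.mem_filter, Finset.mem_range, fperm_length]
  constructor
  · rintro ⟨hjn, hmax⟩
    by_contra hjS
    obtain ⟨i, hij, hval⟩ := fval_ltr_not_mem n S h0 hS hjS hjn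
    have := hmax i (Finset.mem_range.mpr hij)
    rw [fperm_getD n S (by omega), fperm_getD n S hjn] at this
    omega
  · intro hj
    have hjn : j < n := by simpa using hS hj
    refine ⟨hjn, fun i hi => ?_⟩
    rw [Finset.mem_range] at hi
    rw [fperm_getD n S (by omega), fperm_getD n S hjn]
    exact fval_mono_mem n S h0 hS hi hj

end listlevel

section patternhelpers

lemma srel321 {a b c : ℕ} (h1 : b < a) (h2 : c < b) : SameRelOrder [a, b, c] [3, 2, 1] := by
  refine ⟨by simp, fun i j hi hj => ?_⟩
  simp only [List.length_cons, List.length_nil] at hi hj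
  interval_cases i <;> interval_cases j <;> simp [List.getD] <;> omega

lemma srel2143 {a b c d : ℕ} (h1 : b < a) (h2 : a < d) (h3 : d < c) :
    SameRelOrder [a, b, c, d] [2, 1, 4, 3] := by
  refine ⟨by simp, fun i j hi hj => ?_⟩
  simp only [List.length_cons, List.length_nil] at hi hj
  interval_cases i <;> interval_cases j <;> simp [List.getD] <;> omega

lemma mk321 {l : List ℕ} {i j k : ℕ} (hij : i < j) (hjk : j < k) (hk : k < l.length)
    (h1 : l.getD j 0 < l.getD i 0) (h2 : l.getD k 0 < l.getD j 0) :
    SeqContains l [3, 2, 1] := by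
  refine ⟨[l.getD i 0, l.getD j 0, l.getD k 0], ?_, srel321 h1 h2⟩
  have := index_sublist l [i, j, k] (by simp; omega) (by simp; omega)
  simpa using this

lemma mk2143 {l : List ℕ} {i1 i2 i3 i4 : ℕ} (h12 : i1 < i2) (h23 : i2 < i3) (h34 : i3 < i4)
    (h4 : i4 < l.length)
    (hv1 : l.getD i2 0 < l.getD i1 0) (hv2 : l.getD i1 0 < l.getD i4 0)
    (hv3 : l.getD i4 0 < l.getD i3 0) :
    SeqContains l [2, 1, 4, 3] := by
  refine ⟨[l.getD i1 0, l.getD i2 0, l.getD i3 0, l.getD i4 0], ?_, srel2143 hv1 hv2 hv3⟩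
  have := index_sublist l [i1, i2, i3, i4] (by simp; omega) (by simp; omega)
  simpa using this

lemma card_filter_getD (l : List ℕ) (P : ℕ → Prop) [DecidablePred P] :
    ((Finset.range l.length).filter (fun p => P (l.getD p 0))).card = l.countP (fun x => P x) := by
  induction l with
  | nil => simp
  | cons a t ih =>
    rw [Finset.card_filter, List.length_cons, Finset.sum_range_succ']
    simp only [List.getD_cons_succ, List.getD_cons_zero, List.countP_cons]
    rw [← Finset.card_filter, ih]
    by_cases hPa : P a <;> simp [hPa]

lemma countP_range' (v : ℕ) : ∀ m : ℕ, v ≤ m →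
    (List.range' 1 m).countP (fun x => x ≤ v) = v := by
  intro m
  induction m with
  | zero => intro h; interval_cases v; simp
  | succ m ih =>
    intro hv
    rw [List.range'_1_concat, List.countP_append]
    by_cases h : v ≤ m
    · rw [ih h]
      simp only [List.countP_singleton]
      have : ¬ (1 + m ≤ v) := by omega
      simp [this]
    · have hv' : v = m + 1 := by omega
      subst hv'
      rw [List.countP_eq_length.mpr, List.length_range']
      · simp only [List.countP_singleton]
        have : 1 + m ≤ m + 1 := by omega
        simp [this]
      · intro x hx
        rw [List.mem_range'_1] at hx
        simpa using by omega

end patternhelpers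

section determine
variable (l : List ℕ) (hperm : IsPermList n l) (hfish : FishburnFree l)
  (h321 : ¬ SeqContains l [3, 2, 1]) (h2143 : ¬ SeqContains l [2, 1, 4, 3])

include hperm in
lemma len_eq : l.length = n := by
  have := hperm.length_eq
  simpa using this

include hperm in
lemma l_nodup : l.Nodup := hperm.nodup_iff.mpr (List.nodup_range' (s := 1) (n := n))

include hperm in
lemma l_val_mem {j : ℕ} (hj : j < n) : 1 ≤ l.getD j 0 ∧ l.getD j 0 ≤ n := by
  have hlen := len_eq n l hperm
  have hmem : l.getD j 0 ∈ l := by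
    rw [List.getD_eq_getElem l 0 (by omega)]
    exact List.getElem_mem _
  have := hperm.subset hmem
  rw [List.mem_range'_1] at this
  omega

include hperm in
lemma l_inj {i j : ℕ} (hi : i < n) (hj : j < n) (h : l.getD i 0 = l.getD j 0) : i = j := by
  have hlen := len_eq n l hperm
  have hnd := l_nodup n l hperm
  rw [List.getD_eq_getElem l 0 (show i < l.length by omega),
    List.getD_eq_getElem l 0 (show j < l.length by omega)] at h
  exact (List.Nodup.getElem_inj_iff hnd).mp h

include hperm in
lemma l_surj {v : ℕ} (h1 : 1 ≤ v) (h2 : v ≤ n) : ∃ j, j < n ∧ l.getD j 0 = v := by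
  have hlen := len_eq n l hperm
  have hmem : v ∈ l := by
    apply hperm.mem_iff.mpr
    rw [List.mem_range'_1]
    omega
  obtain ⟨i, hi, hv⟩ := List.getElem_of_mem hmem
  exact ⟨i, by omega, by rw [List.getD_eq_getElem l 0 hi]; exact hv⟩

include hperm in
lemma cnt {v : ℕ} (hv : v ≤ n) :
    ((Finset.range n).filter (fun p => l.getD p 0 ≤ v)).card = v := by
  have hlen := len_eq n l hperm
  rw [← hlen, card_filter_getD l (fun x => x ≤ v), hperm.countP_eq]
  exact countP_range' v n hv

include hperm in
lemma maxpos_zero_mem (hn : 1 ≤ n) : 0 ∈ maxpos l := by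
  rw [maxpos, Finset.mem_filter, Finset.mem_range]
  refine ⟨by rw [len_eq n l hperm]; omega, fun i hi => by simp at hi⟩

lemma maxpos_subset : maxpos l ⊆ Finset.range l.length := Finset.filter_subset _ _

lemma maxpos_lt {j : ℕ} (hj : j ∈ maxpos l) {i : ℕ} (hi : i < j) :
    l.getD i 0 < l.getD j 0 := by
  rw [maxpos, Finset.mem_filter] at hj
  exact hj.2 i (Finset.mem_range.mpr hi)

include hperm in
lemma exists_dominating {j : ℕ} (hj : j < n) :
    ∃ p, p ≤ j ∧ p ∈ maxpos l ∧ l.getD j 0 ≤ l.getD p 0 := by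
  induction j using Nat.strong_induction_on with
  | _ j ih =>
    by_cases hjm : j ∈ maxpos l
    · exact ⟨j, le_refl _, hjm, le_refl _⟩
    · have : ∃ i, i < j ∧ ¬ l.getD i 0 < l.getD j 0 := by
        by_contra hcon
        push_neg at hcon
        apply hjm
        rw [maxpos, Finset.mem_filter, Finset.mem_range, len_eq n l hperm]
        exact ⟨hj, fun i hi => hcon i (Finset.mem_range.mp hi)⟩
      obtain ⟨i, hij, hval⟩ := this
      obtain ⟨p, hp1, hp2, hp3⟩ := ih i hij (by omega)
      exact ⟨p, by omega, hp2, by omega⟩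

include hperm h321 in
lemma nonmax_mono {i j : ℕ} (hij : i < j) (hjn : j < n) (hi : i ∉ maxpos l)
    (hj : j ∉ maxpos l) : l.getD i 0 < l.getD j 0 := by
  obtain ⟨p, hp1, hp2, hp3⟩ := exists_dominating n l hperm (show i < n by omega)
  have hpi : p ≠ i := fun h => hi (h ▸ hp2)
  have hpl : l.getD i 0 < l.getD p 0 := by
    rcases lt_or_eq_of_le hp3 with h | h
    · exact h
    · exact absurd (l_inj n l hperm (by omega) (by omega) h.symm) (by omega)
  have hne : l.getD i 0 ≠ l.getD j 0 := fun h =>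
    absurd (l_inj n l hperm (by omega) (by omega) h) (by omega)
  by_contra hcon
  push_neg at hcon
  have hji : l.getD j 0 < l.getD i 0 := by omega
  exact h321 (mk321 (show p < i by omega) hij (by rw [len_eq n l hperm]; omega) hpl hji)

end determine

section determine2
variable (l : List ℕ) (hperm : IsPermList n l) (hfish : FishburnFree l)
  (h321 : ¬ SeqContains l [3, 2, 1]) (h2143 : ¬ SeqContains l [2, 1, 4, 3]) (hn : 1 ≤ n)

include hperm in
lemma maxpos_range : maxpos l ⊆ Finset.range n := by
  rw [← len_eq n l hperm]; exact maxpos_subset l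

include hperm hfish in
lemma initial_run : ∀ j, j + 1 < rr (maxpos l) → l.getD j 0 = j + 1 := by
  intro j
  induction j using Nat.strong_induction_on with
  | _ j ih =>
    intro hj1
    have hjT : j ∈ maxpos l := mem_of_lt_rr _ (by omega)
    have hj1T : j + 1 ∈ maxpos l := mem_of_lt_rr _ (by omega)
    have hj1n : j + 1 < n := by
      have := maxpos_range n l hperm hj1T
      simpa using this
    have hjn : j < n := by omega
    have hb := l_val_mem n l hperm hjn
    -- l_j ≥ j + 1
    have hge : j + 1 ≤ l.getD j 0 := by
      by_contra hcon
      push_neg at hcon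
      set t := l.getD j 0 - 1 with ht
      have htj : t < j := by omega
      have := ih t htj (by omega)
      have : t = j := l_inj n l hperm (by omega) hjn (by omega)
      omega
    rcases eq_or_lt_of_le hge with h | h
    · omega
    · -- l_j ≥ j + 2 : Fishburn copy
      exfalso
      obtain ⟨kk, hkn, hkv⟩ := l_surj n l hperm (v := l.getD j 0 - 1) (by omega) (by omega)
      have hkj : kk ≠ j := fun hh => by rw [hh] at hkv; omega
      have hknotlt : ¬ kk < j := by
        intro hlt
        have := ih kk hlt (by omega)
        omega
      have hkj1 : kk ≠ j + 1 := by
        intro hh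
        have := maxpos_lt l hj1T (show j < j + 1 by omega)
        rw [hh] at hkv
        omega
      have hasc : l.getD j 0 < l.getD (j+1) 0 := maxpos_lt l hj1T (by omega)
      exact hfish ⟨j, kk, by omega, by rw [len_eq n l hperm]; omega, by omega, hasc⟩

include hperm hn in
lemma r1_facts : rr (maxpos l) - 1 ∈ maxpos l ∧ rr (maxpos l) ≤ n := by
  have h0 := maxpos_zero_mem n l hperm hn
  have hrpos := rr_pos (maxpos l) h0
  exact ⟨mem_of_lt_rr _ (by omega), rr_le n (maxpos l) (maxpos_range n l hperm)⟩

include hperm hfish hn in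
lemma val_r1 : rr (maxpos l) ≤ l.getD (rr (maxpos l) - 1) 0 := by
  obtain ⟨hmem, hrn⟩ := r1_facts n l hperm hn
  have h0 := maxpos_zero_mem n l hperm hn
  have hrpos := rr_pos (maxpos l) h0
  by_cases hr1 : rr (maxpos l) = 1
  · rw [hr1]
    simpa using (l_val_mem n l hperm (show 0 < n by omega)).1
  · have h2 : rr (maxpos l) - 2 + 1 < rr (maxpos l) := by omega
    have := initial_run n l hperm hfish _ h2
    have hlt := maxpos_lt l hmem (show rr (maxpos l) - 2 < rr (maxpos l) - 1 by omega)
    omega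

include hperm hfish h321 h2143 hn in
lemma nonmax_lt_r1 {q : ℕ} (hq : q < n) (hqT : q ∉ maxpos l) :
    l.getD q 0 < l.getD (rr (maxpos l) - 1) 0 := by
  obtain ⟨hmem, hrn⟩ := r1_facts n l hperm hn
  have h0 := maxpos_zero_mem n l hperm hn
  have hrpos := rr_pos (maxpos l) h0
  have hrq : rr (maxpos l) ≤ q := by
    by_contra hcon
    exact hqT (mem_of_lt_rr _ (by omega))
  obtain ⟨p, hp1, hp2, hp3⟩ := exists_dominating n l hperm hq
  have hpq : p ≠ q := fun hh => hqT (hh ▸ hp2)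
  have hpl : l.getD q 0 < l.getD p 0 := by
    rcases lt_or_eq_of_le hp3 with h | h
    · exact h
    · exact absurd (l_inj n l hperm hq (show p < n by omega) h) (fun hh => hpq hh.symm)
  by_cases hp : p ≤ rr (maxpos l) - 1
  · rcases eq_or_lt_of_le hp with h | h
    · rw [← h]; exact hpl
    · have := maxpos_lt l hmem h
      omega
  · -- p ≥ rr, p ∈ maxpos so p > rr; build 2143 copy
    push_neg at hp
    by_contra hcon
    push_neg at hcon
    have hrT : rr (maxpos l) ∉ maxpos l := rr_not_mem _
    have hpr : rr (maxpos l) < p := by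
      rcases eq_or_lt_of_le (show rr (maxpos l) ≤ p by omega) with h | h
      · exact absurd (h ▸ hp2) hrT
      · exact h
    have hrltn : rr (maxpos l) < n := by omega
    -- l_r < l_{r-1}
    obtain ⟨p', hp'1, hp'2, hp'3⟩ := exists_dominating n l hperm hrltn
    have hp'r : p' ≠ rr (maxpos l) := fun hh => hrT (hh ▸ hp'2)
    have hlr : l.getD (rr (maxpos l)) 0 < l.getD (rr (maxpos l) - 1) 0 := by
      have hle : l.getD p' 0 ≤ l.getD (rr (maxpos l) - 1) 0 := by
        rcases eq_or_lt_of_le (show p' ≤ rr (maxpos l) - 1 by omega) with h | h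
        · rw [h]
        · exact le_of_lt (maxpos_lt l hmem h)
      have hne : l.getD (rr (maxpos l)) 0 ≠ l.getD (rr (maxpos l) - 1) 0 := fun hh =>
        absurd (l_inj n l hperm hrltn (by omega) hh) (by omega)
      omega
    have hqr1 : q ≠ rr (maxpos l) - 1 := fun hh => hqT (hh ▸ hmem)
    have hlq : l.getD (rr (maxpos l) - 1) 0 < l.getD q 0 := by
      rcases eq_or_lt_of_le hcon with h | h
      · exact absurd (l_inj n l hperm (by omega) hq h) (by omega)
      · exact h
    exact h2143 (mk2143 (show rr (maxpos l) - 1 < rr (maxpos l) by omega) hpr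
      (show p < q by omega) (by rw [len_eq n l hperm]; omega) hlr hlq hpl)

include hperm hfish in
lemma nonmax_ge_r {q : ℕ} (hq : q < n) (hqT : q ∉ maxpos l) :
    rr (maxpos l) ≤ l.getD q 0 := by
  by_contra hcon
  push_neg at hcon
  have hb := l_val_mem n l hperm hq
  have ht : l.getD q 0 - 1 + 1 < rr (maxpos l) := by omega
  have := initial_run n l hperm hfish _ ht
  have heq : l.getD q 0 - 1 = q := l_inj n l hperm (by
    obtain ⟨_, hrn⟩ := r1_facts n l hperm (by omega)
    omega) hq (by omega)
  exact hqT (heq ▸ mem_of_lt_rr _ (by omega))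

end determine2

section determine3
variable (l : List ℕ) (hperm : IsPermList n l) (hfish : FishburnFree l)
  (h321 : ¬ SeqContains l [3, 2, 1]) (h2143 : ¬ SeqContains l [2, 1, 4, 3]) (hn : 1 ≤ n)

include hperm hfish h321 h2143 hn in
lemma det_c2 {j : ℕ} (hjT : j ∈ maxpos l) (hj1 : ¬ j + 1 < rr (maxpos l)) :
    l.getD j 0 = n - (maxpos l).card + sig (maxpos l) j := by
  classical
  obtain ⟨hmem, hrn⟩ := r1_facts n l hperm hn
  have h0 := maxpos_zero_mem n l hperm hn
  have hrpos := rr_pos (maxpos l) h0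
  have hjn : j < n := by simpa using maxpos_range n l hperm hjT
  have hjr : rr (maxpos l) - 1 ≤ j := by omega
  have hbj := l_val_mem n l hperm hjn
  have hr1j : l.getD (rr (maxpos l) - 1) 0 ≤ l.getD j 0 := by
    rcases eq_or_lt_of_le hjr with h | h
    · rw [h]
    · exact le_of_lt (maxpos_lt l hjT h)
  have hrangeT : Finset.range (rr (maxpos l) - 1) ⊆ maxpos l := fun x hx => by
    rw [Finset.mem_range] at hx
    exact mem_of_lt_rr _ (by omega)
  have hATn : maxpos l \ Finset.range (rr (maxpos l) - 1) ⊆ Finset.range n := fun x hx => by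
    rw [Finset.mem_sdiff] at hx
    exact maxpos_range n l hperm hx.1
  have hvr1 := val_r1 n l hperm hfish hn
  have hsplit : (Finset.range n).filter (fun p => l.getD p 0 ≤ l.getD j 0) =
      ((Finset.range n).filter (fun x => x ∉ maxpos l \ Finset.range (rr (maxpos l) - 1))) ∪
        ((maxpos l \ Finset.range (rr (maxpos l) - 1)).filter (· ≤ j)) := by
    ext x
    simp only [Finset.mem_union, Finset.mem_filter, Finset.mem_range, Finset.mem_sdiff]
    constructor
    · rintro ⟨hxn, hxl⟩
      by_cases hxA : x ∈ maxpos l ∧ ¬ x < rr (maxpos l) - 1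
      · refine Or.inr ⟨⟨hxA.1, by simpa using hxA.2⟩, ?_⟩
        by_contra hxj
        push_neg at hxj
        exact absurd (maxpos_lt l hxA.1 (show j < x by omega)) (by omega)
      · exact Or.inl ⟨hxn, fun hc => hxA ⟨hc.1, by simpa using hc.2⟩⟩
    · rintro (⟨hxn, hxA⟩ | ⟨⟨hxT, hxr⟩, hxj⟩)
      · refine ⟨hxn, ?_⟩
        by_cases hxT : x ∈ maxpos l
        · have hxr : x < rr (maxpos l) - 1 := by
            by_contra hc
            exact hxA ⟨hxT, by simpa using hc⟩
          have := initial_run n l hperm hfish x (by omega)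
          omega
        · have := nonmax_lt_r1 n l hperm hfish h321 h2143 hn hxn hxT
          omega
      · have hxn : x < n := by simpa using maxpos_range n l hperm hxT
        refine ⟨hxn, ?_⟩
        rcases eq_or_lt_of_le hxj with h | h
        · rw [h]
        · exact le_of_lt (maxpos_lt l hjT h)
  have hdisj : Disjoint
      ((Finset.range n).filter (fun x => x ∉ maxpos l \ Finset.range (rr (maxpos l) - 1)))
      ((maxpos l \ Finset.range (rr (maxpos l) - 1)).filter (· ≤ j)) := by
    rw [Finset.disjoint_left]
    intro x hx1 hx2
    rw [Finset.mem_filter] at hx1 hx2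
    exact hx1.2 hx2.1
  have hcnt := cnt n l hperm (v := l.getD j 0) (by omega)
  rw [hsplit, Finset.card_union_of_disjoint hdisj] at hcnt
  have hc1 : ((Finset.range n).filter
      (fun x => x ∉ maxpos l \ Finset.range (rr (maxpos l) - 1))).card =
      n - (maxpos l \ Finset.range (rr (maxpos l) - 1)).card := by
    have : (Finset.range n).filter (fun x => x ∉ maxpos l \ Finset.range (rr (maxpos l) - 1)) =
        Finset.range n \ (maxpos l \ Finset.range (rr (maxpos l) - 1)) := by
      ext x; simp only [Finset.mem_filter, Finset.mem_sdiff]; try tauto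
    rw [this, Finset.card_sdiff_of_subset hATn, Finset.card_range]
  have hcA : (maxpos l \ Finset.range (rr (maxpos l) - 1)).card =
      (maxpos l).card - (rr (maxpos l) - 1) := by
    rw [Finset.card_sdiff_of_subset hrangeT, Finset.card_range]
  have hc2 : ((maxpos l \ Finset.range (rr (maxpos l) - 1)).filter (· ≤ j)).card =
      sig (maxpos l) j - (rr (maxpos l) - 1) := by
    have he : (maxpos l \ Finset.range (rr (maxpos l) - 1)).filter (· ≤ j) =
        ((maxpos l).filter (· ≤ j)) \ Finset.range (rr (maxpos l) - 1) := by
      ext x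
      simp only [Finset.mem_filter, Finset.mem_sdiff]
      try tauto
    have hsub : Finset.range (rr (maxpos l) - 1) ⊆ (maxpos l).filter (· ≤ j) := fun x hx => by
      rw [Finset.mem_range] at hx
      exact Finset.mem_filter.mpr ⟨mem_of_lt_rr _ (by omega), by omega⟩
    rw [he, Finset.card_sdiff_of_subset hsub, Finset.card_range, sig]
  have hsge : rr (maxpos l) ≤ sig (maxpos l) j := sig_ge_rr (maxpos l) h0 hjr
  have hsle := sig_le_card (maxpos l) j
  have hrcard : rr (maxpos l) - 1 ≤ (maxpos l).card := by
    simpa using Finset.card_le_card hrangeT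
  have hcn : (maxpos l).card ≤ n := card_le n (maxpos l) (maxpos_range n l hperm)
  have hAn : (maxpos l \ Finset.range (rr (maxpos l) - 1)).card ≤ n := by
    simpa using Finset.card_le_card hATn
  omega

include hperm hfish h321 h2143 hn in
lemma det_c3 {j : ℕ} (hjn : j < n) (hjT : j ∉ maxpos l) :
    l.getD j 0 = rr (maxpos l) - 1 + nu (maxpos l) j := by
  classical
  obtain ⟨hmem, hrn⟩ := r1_facts n l hperm hn
  have h0 := maxpos_zero_mem n l hperm hn
  have hrpos := rr_pos (maxpos l) h0
  have hbj := l_val_mem n l hperm hjn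
  have hjr : rr (maxpos l) ≤ j := by
    by_contra hc
    exact hjT (mem_of_lt_rr _ (by omega))
  have hgr := nonmax_ge_r n l hperm hfish hjn hjT
  have hltr1 := nonmax_lt_r1 n l hperm hfish h321 h2143 hn hjn hjT
  have hsplit : (Finset.range n).filter (fun p => l.getD p 0 ≤ l.getD j 0) =
      Finset.range (rr (maxpos l) - 1) ∪
        ((Finset.range (j + 1)).filter (fun x => x ∉ maxpos l)) := by
    ext x
    simp only [Finset.mem_union, Finset.mem_filter, Finset.mem_range]
    constructor
    · rintro ⟨hxn, hxl⟩
      by_cases hxT : x ∈ maxpos l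
      · left
        by_contra hc
        push_neg at hc
        have hler : l.getD (rr (maxpos l) - 1) 0 ≤ l.getD x 0 := by
          rcases eq_or_lt_of_le (show rr (maxpos l) - 1 ≤ x by omega) with h | h
          · rw [h]
          · exact le_of_lt (maxpos_lt l hxT h)
        omega
      · right
        refine ⟨?_, hxT⟩
        by_contra hc
        push_neg at hc
        exact absurd (nonmax_mono n l hperm h321 (show j < x by omega) hxn hjT hxT) (by omega)
    · rintro (hxr | ⟨hxj, hxT⟩)
      · have hx1 : l.getD x 0 = x + 1 := initial_run n l hperm hfish x (by omega)
        exact ⟨by omega, by omega⟩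
      · refine ⟨by omega, ?_⟩
        rcases eq_or_lt_of_le (show x ≤ j by omega) with h | h
        · rw [h]
        · exact le_of_lt (nonmax_mono n l hperm h321 h (by omega) hxT hjT)
  have hdisj : Disjoint (Finset.range (rr (maxpos l) - 1))
      ((Finset.range (j + 1)).filter (fun x => x ∉ maxpos l)) := by
    rw [Finset.disjoint_left]
    intro x hx1 hx2
    rw [Finset.mem_range] at hx1
    rw [Finset.mem_filter] at hx2
    exact hx2.2 (mem_of_lt_rr _ (by omega))
  have hcnt := cnt n l hperm (v := l.getD j 0) (by omega)
  rw [hsplit, Finset.card_union_of_disjoint hdisj, Finset.card_range] at hcnt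
  have hnu : nu (maxpos l) j =
      ((Finset.range (j + 1)).filter (fun x => x ∉ maxpos l)).card := rfl
  omega

include hperm hfish h321 h2143 hn in
lemma l_eq_fperm : l = fperm n (maxpos l) := by
  have hlen := len_eq n l hperm
  have h0 := maxpos_zero_mem n l hperm hn
  have hS := maxpos_range n l hperm
  apply List.ext_getElem (by rw [hlen, fperm_length])
  intro i h1 h2
  have hin : i < n := by omega
  rw [← List.getD_eq_getElem l 0 h1, ← List.getD_eq_getElem _ 0 h2, fperm_getD n _ hin]
  by_cases hc1 : i + 1 < rr (maxpos l)
  · rw [fval_c1 n _ hc1]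
    exact initial_run n l hperm hfish i hc1
  · by_cases hiT : i ∈ maxpos l
    · rw [fval_c2 n _ hiT hc1]
      exact det_c2 n l hperm hfish h321 h2143 hn hiT hc1
    · rw [fval_c3 n _ hiT]
      exact det_c3 n l hperm hfish h321 h2143 hn hin hiT

end determine3

section final
variable (hn : 1 ≤ n)

lemma mem_fishburn (h0 : 0 ∈ S) (hS : S ⊆ Finset.range n) :
    fperm n S ∈ FishburnSet n [[3, 2, 1], [2, 1, 4, 3]] := by
  refine ⟨fperm_perm n S h0 hS, fperm_fishburn n S h0 hS, ?_⟩
  intro p hp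
  rcases List.mem_pair.mp hp with rfl | rfl
  · exact fperm_avoid321 n S h0 hS
  · exact fperm_avoid2143 n S h0 hS

end final

open Finset in
theorem main_result (n : ℕ) (hn : 1 ≤ n) :
    (∀ k : ℕ, 1 ≤ k →
      {l | l ∈ FishburnSet n [[3, 2, 1], [2, 1, 4, 3]] ∧ ltormaxList l = k}.ncard =
        (n - 1).choose (k - 1)) ∧
      (FishburnSet n [[3, 2, 1], [2, 1, 4, 3]]).ncard = 2 ^ (n - 1) := by
  classical
  set I : Finset ℕ := (Finset.range n).erase 0 with hI
  have hIcard : I.card = n - 1 := by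
    rw [hI, Finset.card_erase_of_mem (by simp; omega), Finset.card_range]
  set Φ : Finset ℕ → List ℕ := fun T => fperm n (insert 0 T) with hΦ
  have hTS : ∀ T ∈ I.powerset, 0 ∈ insert 0 T ∧ insert 0 T ⊆ Finset.range n := by
    intro T hT
    rw [Finset.mem_powerset] at hT
    refine ⟨Finset.mem_insert_self 0 T, ?_⟩
    intro x hx
    rcases Finset.mem_insert.mp hx with rfl | hx
    · simp; omega
    · exact Finset.mem_of_mem_erase (hT hx)
  have hmaxΦ : ∀ T ∈ I.powerset, maxpos (Φ T) = insert 0 T := by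
    intro T hT
    obtain ⟨h0, hS⟩ := hTS T hT
    exact fperm_maxpos n _ h0 hS
  have hinj : Set.InjOn Φ I.powerset := by
    intro T1 h1 T2 h2 heq
    have e1 := hmaxΦ T1 h1
    have e2 := hmaxΦ T2 h2
    rw [heq] at e1
    have : insert 0 T1 = insert 0 T2 := by rw [← e1, ← e2]
    have h01 : 0 ∉ T1 := fun h => by
      have := (Finset.mem_powerset.mp h1) h
      simp [hI] at this
    have h02 : 0 ∉ T2 := fun h => by
      have := (Finset.mem_powerset.mp h2) h
      simp [hI] at this
    rw [← Finset.erase_insert h01, ← Finset.erase_insert h02, this]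
  have hltr : ∀ T ∈ I.powerset, ltormaxList (Φ T) = T.card + 1 := by
    intro T hT
    have h0T : 0 ∉ T := fun h => by
      have := (Finset.mem_powerset.mp hT) h
      simp [hI] at this
    rw [ltormax_eq_card_maxpos, hmaxΦ T hT, Finset.card_insert_of_notMem h0T]
  have hmem : ∀ T ∈ I.powerset, Φ T ∈ FishburnSet n [[3, 2, 1], [2, 1, 4, 3]] := by
    intro T hT
    obtain ⟨h0, hS⟩ := hTS T hT
    exact mem_fishburn n _ h0 hS
  have hsurj : ∀ l ∈ FishburnSet n [[3, 2, 1], [2, 1, 4, 3]],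
      ∃ T ∈ I.powerset, Φ T = l ∧ ltormaxList l = T.card + 1 := by
    intro l hl
    obtain ⟨hperm, hfish, hpats⟩ := hl
    have h321 := hpats [3,2,1] (by simp)
    have h2143 := hpats [2,1,4,3] (by simp)
    have hdet := l_eq_fperm n l hperm hfish h321 h2143 hn
    have h0l : 0 ∈ maxpos l := maxpos_zero_mem n l hperm hn
    refine ⟨(maxpos l).erase 0, ?_, ?_, ?_⟩
    · rw [Finset.mem_powerset, hI]
      exact Finset.erase_subset_erase 0 (maxpos_range n l hperm)
    · rw [hΦ]
      simp only []
      rw [Finset.insert_erase h0l]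
      exact hdet.symm
    · rw [ltormax_eq_card_maxpos, Finset.card_erase_of_mem h0l]
      have : 1 ≤ (maxpos l).card := Finset.card_pos.mpr ⟨0, h0l⟩
      omega
  constructor
  · intro k hk
    have hseteq : {l | l ∈ FishburnSet n [[3, 2, 1], [2, 1, 4, 3]] ∧ ltormaxList l = k} =
        ↑((I.powerset.filter (fun T => T.card + 1 = k)).image Φ) := by
      ext l
      simp only [Set.mem_setOf_eq, Finset.coe_image, Set.mem_image, Finset.mem_coe,
        Finset.mem_filter]
      constructor
      · rintro ⟨hl, hlk⟩
        obtain ⟨T, hT, hTl, hTk⟩ := hsurj l hl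
        exact ⟨T, ⟨hT, by omega⟩, hTl⟩
      · rintro ⟨T, ⟨hT, hTk⟩, rfl⟩
        exact ⟨hmem T hT, by rw [hltr T hT]; omega⟩
    rw [hseteq, Set.ncard_coe_finset]
    rw [Finset.card_image_of_injOn (hinj.mono (by
      intro x hx
      simp only [Finset.coe_filter, Set.mem_setOf_eq] at hx
      exact hx.1))]
    have : I.powerset.filter (fun T => T.card + 1 = k) = Finset.powersetCard (k-1) I := by
      ext T
      rw [Finset.mem_filter, Finset.mem_powerset, Finset.mem_powersetCard]
      constructor
      · rintro ⟨h1, h2⟩; exact ⟨h1, by omega⟩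
      · rintro ⟨h1, h2⟩; exact ⟨h1, by omega⟩
    rw [this, Finset.card_powersetCard, hIcard]
  · have hseteq : FishburnSet n [[3, 2, 1], [2, 1, 4, 3]] = ↑(I.powerset.image Φ) := by
      ext l
      simp only [Finset.coe_image, Set.mem_image, Finset.mem_coe]
      constructor
      · intro hl
        obtain ⟨T, hT, hTl, -⟩ := hsurj l hl
        exact ⟨T, hT, hTl⟩
      · rintro ⟨T, hT, rfl⟩
        exact hmem T hT
    rw [hseteq, Set.ncard_coe_finset, Finset.card_image_of_injOn hinj,
      Finset.card_powerset, hIcard]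

end Stmt19

/-- For all `n ≥ 1` and all `k ≥ 1`, the number of permutations in `F_n(321, 2143)`
with exactly `k` left-to-right maxima is `C(n-1, k-1)`; in particular
`|F_n(321, 2143)| = 2 ^ (n-1)`. -/
theorem stmt19 (n : ℕ) (hn : 1 ≤ n) :
    (∀ k : ℕ, 1 ≤ k →
      {l | l ∈ FishburnSet n [[3, 2, 1], [2, 1, 4, 3]] ∧ ltormaxList l = k}.ncard =
        (n - 1).choose (k - 1)) ∧
      (FishburnSet n [[3, 2, 1], [2, 1, 4, 3]]).ncard = 2 ^ (n - 1) :=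
  Stmt19.main_result n hn
end
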